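/- arXiv:2210.06095 — 10 statements merged into one kernel-verified Lean document; each statement's English description precedes it below -/
import Mathlib

section
/- For continuous functions f, g : X → ℝ on a Hausdorff topological vector space X and all x, x' ∈ X: Lf(x,x') + Lg(x,x') ⊑ L(f+g)(x,x'), i.e., the interval L(f+g)(x,x') is contained in the Minkowski sum of the intervals Lf(x,x') and Lg(x,x') (subadditivity of the domain-theoretic directional derivative); equivalently, limsup_{y→x,z→x',r→0⁺} ((f+g)(y+rz)−(f+g)(y))/r ≤ limsup for f plus limsup for g, and dually for liminf. -/
open Filter Topology Classical

variable {X : Type*} [AddCommGroup X] [Module ℝ X] [TopologicalSpace X]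
  [IsTopologicalAddGroup X] [ContinuousSMul ℝ X] [T2Space X]

/-- The filter of difference quotients `(f (y + r • z) - f y) / r` as `y → x`, `z → x'`,
`r → 0⁺`. -/
noncomputable def dqF (f : X → ℝ) (x x' : X) : Filter ℝ :=
  Filter.map (fun p : (X × X) × ℝ => (f (p.1.1 + p.2 • p.1.2) - f p.1.1) / p.2)
    (((𝓝 x) ×ˢ (𝓝 x')) ×ˢ (𝓝[>] (0 : ℝ)))

/-- The domain-theoretic directional derivative `Lf(x,x')` as a subset of `ℝ`:
the compact interval `[liminf, limsup]` of the difference quotients when these are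
bounded, and the whole real line otherwise. -/
noncomputable def LIntv (f : X → ℝ) (x x' : X) : Set ℝ :=
  if (dqF f x x').IsBounded (· ≤ ·) ∧ (dqF f x x').IsBounded (· ≥ ·) then
    Set.Icc (Filter.liminf id (dqF f x x')) (Filter.limsup id (dqF f x x'))
  else Set.univ

lemma icc_subset_image2' {a b c d l u : ℝ} (hab : a ≤ b) (hcd : c ≤ d)
    (hl : a + c ≤ l) (hu : u ≤ b + d) :
    Set.Icc l u ⊆ Set.image2 (· + ·) (Set.Icc a b) (Set.Icc c d) := by
  rintro t ⟨ht1, ht2⟩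
  refine ⟨max a (t - d), ⟨le_max_left _ _, max_le hab (by linarith)⟩,
    t - max a (t - d), ⟨?_, ?_⟩, by ring⟩
  · rcases max_cases a (t - d) with ⟨h, _⟩ | ⟨h, _⟩ <;> rw [h] <;> linarith
  · rcases max_cases a (t - d) with ⟨h, _⟩ | ⟨h, _⟩ <;> rw [h] <;> linarith

lemma dqF_neBot (f : X → ℝ) (x x' : X) : (dqF f x x').NeBot := by
  unfold dqF
  exact Filter.map_neBot

lemma LIntv_nonempty (f : X → ℝ) (x x' : X) : (LIntv f x x').Nonempty := by
  have := dqF_neBot f x x'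
  unfold LIntv
  split_ifs with h
  · exact Set.nonempty_Icc.2 (Filter.liminf_le_limsup h.1 h.2)
  · exact Set.univ_nonempty

lemma subset_image2_of_left_univ {s t : Set ℝ} (hs : s = Set.univ) (ht : t.Nonempty)
    (u : Set ℝ) : u ⊆ Set.image2 (· + ·) s t := by
  intro a _
  obtain ⟨b, hb⟩ := ht
  exact ⟨a - b, hs ▸ Set.mem_univ _, b, hb, by ring⟩

lemma subset_image2_of_right_univ {s t : Set ℝ} (hs : s.Nonempty) (ht : t = Set.univ)
    (u : Set ℝ) : u ⊆ Set.image2 (· + ·) s t := by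
  intro a _
  obtain ⟨b, hb⟩ := hs
  exact ⟨b, hb, a - b, ht ▸ Set.mem_univ _, by ring⟩

/-- Subadditivity of the domain-theoretic directional derivative:
`Lf(x,x') + Lg(x,x') ⊑ L(f+g)(x,x')`, i.e. the interval `L(f+g)(x,x')` is contained
in the Minkowski sum of the intervals `Lf(x,x')` and `Lg(x,x')`. -/
theorem stmt1 (f g : X → ℝ) (hf : Continuous f) (hg : Continuous g) (x x' : X) :
    LIntv (fun y => f y + g y) x x' ⊆
      Set.image2 (· + ·) (LIntv f x x') (LIntv g x x') := by
  by_cases hbf : (dqF f x x').IsBounded (· ≤ ·) ∧ (dqF f x x').IsBounded (· ≥ ·)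
  swap
  · exact subset_image2_of_left_univ (by unfold LIntv; rw [if_neg hbf])
      (LIntv_nonempty g x x') _
  by_cases hbg : (dqF g x x').IsBounded (· ≤ ·) ∧ (dqF g x x').IsBounded (· ≥ ·)
  swap
  · exact subset_image2_of_right_univ (LIntv_nonempty f x x')
      (by unfold LIntv; rw [if_neg hbg]) _
  -- main case: everything bounded
  set F : Filter ((X × X) × ℝ) := ((𝓝 x) ×ˢ (𝓝 x')) ×ˢ (𝓝[>] (0 : ℝ)) with hF
  have hne : F.NeBot := by rw [hF]; infer_instance
  set qf : (X × X) × ℝ → ℝ := fun p => (f (p.1.1 + p.2 • p.1.2) - f p.1.1) / p.2 with hqf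
  set qg : (X × X) × ℝ → ℝ := fun p => (g (p.1.1 + p.2 • p.1.2) - g p.1.1) / p.2 with hqg
  have hdf : dqF f x x' = Filter.map qf F := rfl
  have hdg : dqF g x x' = Filter.map qg F := rfl
  have hdfg : dqF (fun y => f y + g y) x x' = Filter.map (qf + qg) F := by
    unfold dqF
    congr 1
    funext p
    show _ = qf p + qg p
    rw [hqf, hqg]
    have : (p.2 : ℝ) = p.2 := rfl
    field_simp
    ring
  have key_limsup : ∀ u : (X × X) × ℝ → ℝ,
      Filter.limsup id (Filter.map u F) = Filter.limsup u F := by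
    intro u
    simp [Filter.limsup, Filter.map_map, Function.comp]
  have key_liminf : ∀ u : (X × X) × ℝ → ℝ,
      Filter.liminf id (Filter.map u F) = Filter.liminf u F := by
    intro u
    simp [Filter.liminf, Filter.map_map, Function.comp]
  have hf1 : F.IsBoundedUnder (· ≤ ·) qf := by
    rw [Filter.IsBoundedUnder, ← hdf]; exact hbf.1
  have hf2 : F.IsBoundedUnder (· ≥ ·) qf := by
    rw [Filter.IsBoundedUnder, ← hdf]; exact hbf.2
  have hg1 : F.IsBoundedUnder (· ≤ ·) qg := by
    rw [Filter.IsBoundedUnder, ← hdg]; exact hbg.1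
  have hg2 : F.IsBoundedUnder (· ≥ ·) qg := by
    rw [Filter.IsBoundedUnder, ← hdg]; exact hbg.2
  have hsum1 : (dqF (fun y => f y + g y) x x').IsBounded (· ≤ ·) := by
    rw [hdfg]; exact Filter.isBoundedUnder_le_add hf1 hg1
  have hsum2 : (dqF (fun y => f y + g y) x x').IsBounded (· ≥ ·) := by
    rw [hdfg]; exact Filter.isBoundedUnder_ge_add hf2 hg2
  have hlhs : LIntv (fun y => f y + g y) x x' =
      Set.Icc (Filter.liminf id (dqF (fun y => f y + g y) x x'))
        (Filter.limsup id (dqF (fun y => f y + g y) x x')) := by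
    unfold LIntv; rw [if_pos ⟨hsum1, hsum2⟩]
  have hrf : LIntv f x x' =
      Set.Icc (Filter.liminf id (dqF f x x')) (Filter.limsup id (dqF f x x')) := by
    unfold LIntv; rw [if_pos hbf]
  have hrg : LIntv g x x' =
      Set.Icc (Filter.liminf id (dqF g x x')) (Filter.limsup id (dqF g x x')) := by
    unfold LIntv; rw [if_pos hbg]
  rw [hlhs, hrf, hrg, hdf, hdg, hdfg, key_limsup, key_limsup, key_limsup,
    key_liminf, key_liminf, key_liminf]
  have hne' := dqF_neBot f x x'
  refine icc_subset_image2' ?_ ?_ ?_ ?_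
  · exact Filter.liminf_le_limsup hf1 hf2
  · exact Filter.liminf_le_limsup hg1 hg2
  · exact le_liminf_add hf2 hf1 hg2 hg1.isCoboundedUnder_ge
  · exact limsup_add_le hf2 hf1 hg2.isCoboundedUnder_le hg1
end

section
/- The domain-theoretic directional derivative Lf : X × X → 𝕀ℝ of a continuous function f : X → ℝ is Scott continuous: if Lf(x,x') is a compact interval, then for every ε > 0 there exist open neighbourhoods O of x and O' of x' and δ > 0 such that for all y ∈ O, z ∈ O', 0 < r < δ, the difference quotient (f(y+rz)−f(y))/r lies in ((Lf(x,x'))⁻ − ε, (Lf(x,x'))⁺ + ε). -/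
open Filter Topology Classical

variable {X : Type*} [AddCommGroup X] [Module ℝ X] [TopologicalSpace X]
  [IsTopologicalAddGroup X] [ContinuousSMul ℝ X] [T2Space X]

/-- Scott continuity of the domain-theoretic directional derivative: if `Lf(x,x')` is a
compact interval, then for every `ε > 0` there are open neighbourhoods `O` of `x`, `O'` of
`x'` and a `δ > 0` such that all difference quotients with `y ∈ O`, `z ∈ O'`, `0 < r < δ`
lie in `(Lf(x,x')⁻ − ε, Lf(x,x')⁺ + ε)`. -/
theorem stmt4 (f : X → ℝ) (hf : Continuous f) (x x' : X)
    (hub : (dqF f x x').IsBounded (· ≤ ·)) (hlb : (dqF f x x').IsBounded (· ≥ ·)) :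
    ∀ ε > (0 : ℝ), ∃ O O' : Set X, IsOpen O ∧ IsOpen O' ∧ x ∈ O ∧ x' ∈ O' ∧
      ∃ δ > (0 : ℝ), ∀ y ∈ O, ∀ z ∈ O', ∀ r : ℝ, 0 < r → r < δ →
        (f (y + r • z) - f y) / r ∈
          Set.Ioo (Filter.liminf id (dqF f x x') - ε)
                  (Filter.limsup id (dqF f x x') + ε) := by
  intro ε hε
  have h1 : ∀ᶠ q in dqF f x x', id q < Filter.limsup id (dqF f x x') + ε :=
    Filter.eventually_lt_of_limsup_lt (by linarith) hub
  have h2 : ∀ᶠ q in dqF f x x', Filter.liminf id (dqF f x x') - ε < id q :=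
    Filter.eventually_lt_of_lt_liminf (by linarith) hlb
  have h := h2.and h1
  rw [dqF, Filter.eventually_map, Filter.eventually_prod_iff] at h
  obtain ⟨pa, hpa, pb, hpb, himp⟩ := h
  rw [Filter.eventually_prod_iff] at hpa
  obtain ⟨qa, hqa, qb, hqb, himp2⟩ := hpa
  rw [eventually_nhds_iff] at hqa hqb
  obtain ⟨O, hO, hOopen, hxO⟩ := hqa
  obtain ⟨O', hO', hO'open, hx'O'⟩ := hqb
  have hpb' : {r : ℝ | pb r} ∈ 𝓝[>] (0:ℝ) := hpb
  rw [mem_nhdsGT_iff_exists_Ioo_subset] at hpb'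
  obtain ⟨δ, hδ, hsub⟩ := hpb'
  refine ⟨O, O', hOopen, hO'open, hxO, hx'O', δ, hδ, fun y hy z hz r hr hrδ => ?_⟩
  exact himp (x := (y, z)) (himp2 (hO y hy) (hO' z hz)) (hsub ⟨hr, hrδ⟩)
end

section
/- If f : ℝ → ℝ is continuous and Lf(x,x') is a bounded (compact) interval at some point (x,x') ∈ ℝ² with x' ≠ 0, then f is locally Lipschitz at x: there exist an open neighbourhood O of x and a constant k > 0 such that |f(x₁) − f(x₂)| ≤ k·|x₁ − x₂| for all x₁, x₂ ∈ O. -/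
open Filter Topology Classical

variable {X : Type*} [AddCommGroup X] [Module ℝ X] [TopologicalSpace X]
  [IsTopologicalAddGroup X] [ContinuousSMul ℝ X] [T2Space X]

/-- If `f : ℝ → ℝ` is continuous and `Lf(x,x')` is a bounded (compact) interval at some
`(x,x')` with `x' ≠ 0`, then `f` is locally Lipschitz at `x`. -/
theorem stmt5 (f : ℝ → ℝ) (hf : Continuous f) (x x' : ℝ) (hx' : x' ≠ 0)
    (hub : (dqF f x x').IsBounded (· ≤ ·)) (hlb : (dqF f x x').IsBounded (· ≥ ·)) :
    ∃ O : Set ℝ, IsOpen O ∧ x ∈ O ∧ ∃ k > (0 : ℝ),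
      ∀ x₁ ∈ O, ∀ x₂ ∈ O, |f x₁ - f x₂| ≤ k * |x₁ - x₂| := by
  obtain ⟨M, hM⟩ := hub
  obtain ⟨m, hm⟩ := hlb
  set C : ℝ := max |M| |m| with hC
  rw [dqF, Filter.eventually_map] at hM hm
  have hbd : ∀ᶠ p in ((𝓝 x ×ˢ 𝓝 x') ×ˢ 𝓝[>] (0:ℝ)),
      |(f (p.1.1 + p.2 * p.1.2) - f p.1.1) / p.2| ≤ C := by
    filter_upwards [hM, hm] with p h1 h2
    rw [abs_le]
    constructor
    · calc -C ≤ -|m| := by simp [hC]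
        _ ≤ m := neg_abs_le m
        _ ≤ _ := h2
    · exact h1.trans ((le_abs_self M).trans (le_max_left _ _))
  rw [Filter.eventually_iff, Filter.mem_prod_iff] at hbd
  obtain ⟨S, hS, T, hT, hST⟩ := hbd
  rw [Filter.mem_prod_iff] at hS
  obtain ⟨U, hU, V, hV, hUV⟩ := hS
  obtain ⟨ε, hε, hIoo⟩ := mem_nhdsGT_iff_exists_Ioo_subset.mp hT
  have hεpos : (0:ℝ) < ε := hε
  obtain ⟨δ₁, hδ₁, hball⟩ := Metric.mem_nhds_iff.mp hU
  have hx'pos : (0:ℝ) < |x'| := abs_pos.mpr hx'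
  set δ : ℝ := min δ₁ (ε * |x'| / 2) with hδdef
  have hδpos : 0 < δ := lt_min hδ₁ (by positivity)
  refine ⟨Metric.ball x δ, Metric.isOpen_ball, Metric.mem_ball_self hδpos,
    (C + 1) / |x'|, by positivity, ?_⟩
  have key : ∀ a ∈ Metric.ball x δ, ∀ b ∈ Metric.ball x δ, 0 < (b - a) / x' →
      |f b - f a| ≤ (C + 1) / |x'| * |b - a| := by
    intro a ha b hb hr
    set r : ℝ := (b - a) / x' with hrdef
    have hrx' : r * x' = b - a := div_mul_cancel₀ _ hx'
    have hab : |b - a| < ε * |x'| := by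
      have : |b - a| < 2 * δ := by
        have h1 := Metric.mem_ball.mp ha
        have h2 := Metric.mem_ball.mp hb
        rw [Real.dist_eq] at h1 h2
        have h3 := abs_sub_le b x a
        rw [abs_sub_comm x a] at h3
        linarith
      calc |b - a| < 2 * δ := this
        _ ≤ 2 * (ε * |x'| / 2) := by
            have : δ ≤ ε * |x'| / 2 := min_le_right _ _
            linarith
        _ = ε * |x'| := by ring
    have hrε : r < ε := by
      have : r = |b - a| / |x'| := by
        rw [← abs_div, abs_of_pos hr]
      rw [this]
      rw [div_lt_iff₀ hx'pos]
      linarith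
    have hmem : ((a, x'), r) ∈ (U ×ˢ V) ×ˢ Set.Ioo 0 ε := by
      refine ⟨⟨hball (Metric.mem_ball.mp ha |>.trans_le (min_le_left _ _)), mem_of_mem_nhds hV⟩, hr, hrε⟩
    have hq := hST (Set.prod_mono hUV (hIoo) hmem)
    have hq' : |(f (a + r * x') - f a) / r| ≤ C := hq
    rw [hrx'] at hq'
    have : a + (b - a) = b := by ring
    rw [this] at hq'
    have hrpos : 0 < r := hr
    rw [abs_div, abs_of_pos hrpos, div_le_iff₀ hrpos] at hq'
    have hreq : r = |b - a| / |x'| := by rw [← abs_div, abs_of_pos hr]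
    calc |f b - f a| ≤ C * r := hq'
      _ = C * (|b - a| / |x'|) := by rw [hreq]
      _ = C / |x'| * |b - a| := by ring
      _ ≤ (C + 1) / |x'| * |b - a| := by gcongr; linarith
  intro x₁ h₁ x₂ h₂
  rcases eq_or_ne x₁ x₂ with h | h
  · simp [h]
  · have hne : (x₂ - x₁) / x' ≠ 0 := by
      apply div_ne_zero (sub_ne_zero.mpr (Ne.symm h)) hx'
    rcases hne.lt_or_gt with hlt | hgt
    · exact key x₂ h₂ x₁ h₁ (by
        have : (x₁ - x₂) / x' = -((x₂ - x₁) / x') := by ring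
        rw [this]; linarith)
    · rw [abs_sub_comm (f x₁), abs_sub_comm x₁]
      exact key x₁ h₁ x₂ h₂ hgt
end

section
/- If g : [a,b] → ℝ is non-decreasing and right-continuous with c = g(a), d = g(b), then there exists a non-decreasing right-continuous map g† : [c,d] → [a,b] such that for every continuous f : [a,b] → ℝ, the Riemann–Stieltjes integral ∫ₐᵇ f dg equals the Riemann integral ∫_c^d f(g†(x)) dx. -/
open MeasureTheory Set

section aux

variable (a b : ℝ) (g : StieltjesFunction ℝ)

noncomputable def gdAux (x : ℝ) : ℝ := sInf (({t | x < g t} ∩ Icc a b) ∪ {b})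

variable {a b g}

lemma gdAux_mem (hab : a ≤ b) (x : ℝ) : gdAux a b g x ∈ Icc a b := by
  have hsub : ({t | x < g t} ∩ Icc a b) ∪ {b} ⊆ Icc a b := by
    rintro t (⟨-, ht⟩ | rfl)
    · exact ht
    · exact ⟨hab, le_rfl⟩
  have hne : (({t | x < g t} ∩ Icc a b) ∪ {b}).Nonempty := ⟨b, Or.inr rfl⟩
  have hbdd : BddBelow (({t | x < g t} ∩ Icc a b) ∪ {b}) :=
    ⟨a, fun t ht => (hsub ht).1⟩
  exact ⟨le_csInf hne fun t ht => (hsub ht).1, csInf_le hbdd (Or.inr rfl)⟩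

lemma gdAux_mono (hab : a ≤ b) : Monotone (gdAux a b g) := by
  intro x y hxy
  refine csInf_le_csInf ⟨a, fun t ht => ?_⟩ ⟨b, Or.inr rfl⟩ ?_
  · rcases ht with ⟨-, ht⟩ | rfl
    · exact ht.1
    · exact hab
  · rintro t (⟨ht, ht2⟩ | rfl)
    · exact Or.inl ⟨lt_of_le_of_lt hxy ht, ht2⟩
    · exact Or.inr rfl

lemma gdAux_le (hx : x < g t) (ht : t ∈ Icc a b) : gdAux a b g x ≤ t :=
  csInf_le ⟨a, by rintro s (⟨-, hs⟩ | rfl); exacts [hs.1, ht.1.trans ht.2]⟩ (Or.inl ⟨hx, ht⟩)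

lemma le_g_gdAux (hab : a ≤ b) (hx : x ≤ g b) : x ≤ g (gdAux a b g x) := by
  set m := gdAux a b g x with hm
  have key : ∀ u ∈ Ioi m, x ≤ g u := by
    intro u hu
    obtain ⟨s, hs, hsu⟩ := exists_lt_of_csInf_lt ⟨b, Or.inr rfl⟩ (show sInf _ < u from hu)
    rcases hs with ⟨hs1, -⟩ | rfl
    · exact le_trans hs1.le (g.mono hsu.le)
    · exact le_trans hx (g.mono hsu.le)
  have : x ≤ ⨅ r : Ioi m, g r := le_ciInf fun r => key r r.2
  rwa [g.iInf_Ioi_eq] at this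

lemma gdAux_rightCont (hab : a ≤ b) (x : ℝ) :
    ContinuousWithinAt (gdAux a b g) (Ici x) x := by
  have hmono := gdAux_mono (g := g) hab
  rw [ContinuousWithinAt]
  refine tendsto_order.2 ⟨fun l hl => ?_, fun u hu => ?_⟩
  · filter_upwards [self_mem_nhdsWithin] with y hy
    exact lt_of_lt_of_le hl (hmono hy)
  · rcases eq_or_lt_of_le (gdAux_mem (g := g) hab x).2 with hb | hb
    · filter_upwards [self_mem_nhdsWithin] with y hy
      calc gdAux a b g y ≤ b := (gdAux_mem (g := g) hab y).2
        _ = gdAux a b g x := hb.symm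
        _ < u := hu
    · have hlt : gdAux a b g x < min b u := lt_min hb hu
      obtain ⟨s, hs, hsu⟩ := exists_lt_of_csInf_lt ⟨b, Or.inr rfl⟩ hlt
      rcases hs with ⟨hs1, hs2⟩ | rfl
      · have hxgs : x < g s := hs1
        filter_upwards [Ico_mem_nhdsGE_of_mem (⟨le_rfl, hxgs⟩ : x ∈ Ico x (g s))]
          with y hy
        exact lt_of_le_of_lt (gdAux_le hy.2 hs2) (lt_of_lt_of_le hsu (min_le_right _ _))
      · exact absurd hsu (not_lt.2 (min_le_left _ _))

lemma gdAux_map_measure (hab : a ≤ b) :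
    Measure.map (gdAux a b g) (volume.restrict (Ioc (g a) (g b)))
      = g.measure.restrict (Ioc a b) := by
  have hmeas : Measurable (gdAux a b g) := (gdAux_mono (g := g) hab).measurable
  have hfin : IsFiniteMeasure
      (Measure.map (gdAux a b g) (volume.restrict (Ioc (g a) (g b)))) := by
    constructor
    rw [Measure.map_apply hmeas MeasurableSet.univ]
    simp [Real.volume_Ioc]
  refine Measure.ext_of_Iic _ _ fun t => ?_
  rw [Measure.map_apply hmeas measurableSet_Iic,
    Measure.restrict_apply (hmeas measurableSet_Iic),
    Measure.restrict_apply measurableSet_Iic]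
  rcases lt_or_ge t a with hta | hta
  · have h1 : gdAux a b g ⁻¹' Iic t ∩ Ioc (g a) (g b) = ∅ := by
      ext x
      simp only [mem_inter_iff, mem_preimage, mem_Iic, mem_Ioc, mem_empty_iff_false,
        iff_false, not_and]
      intro hx
      exact absurd (le_trans (gdAux_mem (g := g) hab x).1 hx) (not_le.2 hta)
    have h2 : Iic t ∩ Ioc a b = ∅ := by
      ext x; simp only [mem_inter_iff, mem_Iic, mem_Ioc, mem_empty_iff_false, iff_false]
      rintro ⟨h1', h2', -⟩; exact absurd (lt_of_lt_of_le h2' h1') (not_lt.2 hta.le)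
    rw [h1, h2]; simp
  rcases le_or_gt t b with htb | htb
  · have ht : t ∈ Icc a b := ⟨hta, htb⟩
    have hsub1 : Ioo (g a) (g t) ⊆ gdAux a b g ⁻¹' Iic t ∩ Ioc (g a) (g b) := by
      rintro x ⟨hx1, hx2⟩
      exact ⟨gdAux_le hx2 ht, hx1, le_trans hx2.le (g.mono htb)⟩
    have hsub2 : gdAux a b g ⁻¹' Iic t ∩ Ioc (g a) (g b) ⊆ Ioc (g a) (g t) := by
      rintro x ⟨hx1, hx2, hx3⟩
      exact ⟨hx2, le_trans (le_g_gdAux hab hx3) (g.mono hx1)⟩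
    have hle1 := measure_mono hsub1 (μ := volume)
    have hle2 := measure_mono hsub2 (μ := volume)
    rw [Real.volume_Ioo] at hle1
    rw [Real.volume_Ioc] at hle2
    have : volume (gdAux a b g ⁻¹' Iic t ∩ Ioc (g a) (g b)) = ENNReal.ofReal (g t - g a) :=
      le_antisymm hle2 hle1
    rw [this]
    have : Iic t ∩ Ioc a b = Ioc a t := by
      ext x; simp only [mem_inter_iff, mem_Iic, mem_Ioc]
      constructor
      · rintro ⟨h1', h2', -⟩; exact ⟨h2', h1'⟩
      · rintro ⟨h1', h2'⟩; exact ⟨h2', h1', le_trans h2' htb⟩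
    rw [this, g.measure_Ioc]
  · have h1 : gdAux a b g ⁻¹' Iic t ∩ Ioc (g a) (g b) = Ioc (g a) (g b) := by
      ext x
      simp only [mem_inter_iff, mem_preimage, mem_Iic, and_iff_right_iff_imp]
      intro hx
      exact le_trans (gdAux_mem (g := g) hab x).2 htb.le
    have h2 : Iic t ∩ Ioc a b = Ioc a b := by
      ext x
      simp only [mem_inter_iff, mem_Iic, mem_Ioc, and_iff_right_iff_imp]
      rintro ⟨-, hx⟩
      exact le_trans hx htb.le
    rw [h1, h2, Real.volume_Ioc, g.measure_Ioc]

end aux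

/-- Change of variables for the Riemann–Stieltjes integral: if `g` is non-decreasing and
right-continuous (a Stieltjes function) with `c = g a`, `d = g b`, then there is a
non-decreasing right-continuous map `g† : [c,d] → [a,b]` such that for every continuous
`f : [a,b] → ℝ`, the Riemann–Stieltjes integral `∫ₐᵇ f dg` (realized as the integral of
`f` over `(a,b]` against the Lebesgue–Stieltjes measure of `g`) equals the Riemann
integral `∫_c^d f (g† x) dx`. -/
theorem stmt9 (a b : ℝ) (hab : a ≤ b) (g : StieltjesFunction ℝ) :
    ∃ gd : ℝ → ℝ,
      MonotoneOn gd (Set.Icc (g a) (g b)) ∧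
      (∀ x ∈ Set.Ico (g a) (g b), ContinuousWithinAt gd (Set.Ici x) x) ∧
      (∀ x ∈ Set.Icc (g a) (g b), gd x ∈ Set.Icc a b) ∧
      ∀ f : ℝ → ℝ, ContinuousOn f (Set.Icc a b) →
        ∫ x in Set.Ioc a b, f x ∂g.measure = ∫ x in (g a)..(g b), f (gd x) := by
  refine ⟨gdAux a b g, ((gdAux_mono (g := g) hab).monotoneOn _),
    fun x _ => gdAux_rightCont hab x, fun x _ => gdAux_mem hab x, fun f hf => ?_⟩
  have hmeas : Measurable (gdAux a b g) := (gdAux_mono (g := g) hab).measurable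
  have hmap := gdAux_map_measure (g := g) hab
  have hf' : AEStronglyMeasurable f
      (Measure.map (gdAux a b g) (volume.restrict (Ioc (g a) (g b)))) := by
    rw [hmap]
    exact ((hf.mono Ioc_subset_Icc_self).aestronglyMeasurable measurableSet_Ioc)
  rw [← hmap, integral_map hmeas.aemeasurable hf',
    intervalIntegral.integral_of_le (g.mono hab)]
end

section
/- Let F : C([0,1], ℝ) → ℝ be a continuous linear functional (with respect to the sup norm). Then there exist compact intervals [c₁,d₁], [c₂,d₂] and right-continuous non-decreasing maps g₁† : [c₁,d₁] → [0,1] and g₂† : [c₂,d₂] → [0,1] such that for every continuous f : [0,1] → ℝ, F(f) = ∫_{c₁}^{d₁} f(g₁†(x)) dx − ∫_{c₂}^{d₂} f(g₂†(x)) dx. -/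
open Set
open ENNReal

noncomputable section RieszAux

/-- right-continuous generalized inverse of a nondecreasing `h` vanishing on negatives -/
def genInv (h : ℝ → ℝ) : ℝ → ℝ := fun x =>
  if x < h 1 then sInf ({t | x < h t} ∩ Ici 0) else 1

section genInv

variable {h : ℝ → ℝ} (hm : Monotone h) (h0 : ∀ t < (0:ℝ), h t = 0)

lemma genInv_nonempty {x : ℝ} (hx : x < h 1) : ({t | x < h t} ∩ Ici 0).Nonempty :=
  ⟨1, hx, mem_Ici.2 zero_le_one⟩

lemma genInv_bddBelow (x : ℝ) : BddBelow ({t | x < h t} ∩ Ici 0) :=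
  ⟨0, fun _ ht => ht.2⟩

lemma genInv_mem01 (x : ℝ) : genInv h x ∈ Icc (0:ℝ) 1 := by
  unfold genInv
  split_ifs with hx
  · exact ⟨le_csInf (genInv_nonempty hx) fun t ht => ht.2,
      csInf_le (genInv_bddBelow x) ⟨hx, mem_Ici.2 zero_le_one⟩⟩
  · exact ⟨zero_le_one, le_rfl⟩

lemma genInv_mono : Monotone (genInv h) := by
  intro x y hxy
  unfold genInv
  split_ifs with hx hy hy
  · exact csInf_le_csInf (genInv_bddBelow x) (genInv_nonempty hy)
      (fun t ht => ⟨lt_of_le_of_lt hxy ht.1, ht.2⟩)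
  · exact csInf_le (genInv_bddBelow x) ⟨hx, mem_Ici.2 zero_le_one⟩
  · exact absurd (lt_of_le_of_lt hxy hy) hx
  · exact le_rfl

include hm in
lemma genInv_rightCont {x : ℝ} (hx : x < h 1) :
    ContinuousWithinAt (genInv h) (Ici x) x := by
  rw [Metric.continuousWithinAt_iff]
  intro ε εpos
  have hx' : genInv h x = sInf ({t | x < h t} ∩ Ici 0) := if_pos hx
  obtain ⟨t₁, ht₁, ht₁lt⟩ : ∃ t₁ ∈ {t | x < h t} ∩ Ici 0, t₁ < genInv h x + ε := by
    rw [hx']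
    exact (csInf_lt_iff (genInv_bddBelow x) (genInv_nonempty hx)).mp
      (by rw [← hx']; linarith)
  set t₀ := min t₁ 1 with ht₀def
  have ht₀mem : x < h t₀ := by
    rcases min_cases t₁ 1 with ⟨he, _⟩ | ⟨he, _⟩ <;> rw [ht₀def, he]
    · exact ht₁.1
    · exact hx
  have ht₀0 : (0:ℝ) ≤ t₀ := le_min ht₁.2 zero_le_one
  have ht₀le1 : t₀ ≤ 1 := min_le_right _ _
  have ht₀lt' : t₀ < genInv h x + ε := lt_of_le_of_lt (min_le_left _ _) ht₁lt
  refine ⟨h t₀ - x, by simpa using ht₀mem, fun {y} hy hdy => ?_⟩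
  have hyx : x ≤ y := hy
  have hylt : y < h t₀ := by
    rw [Real.dist_eq, abs_of_nonneg (by linarith)] at hdy
    linarith
  have hy1 : y < h 1 := lt_of_lt_of_le hylt (hm ht₀le1)
  have hy' : genInv h y = sInf ({t | y < h t} ∩ Ici 0) := if_pos hy1
  have h1 : genInv h x ≤ genInv h y := genInv_mono hyx
  have h2 : genInv h y ≤ t₀ := by
    rw [hy']
    exact csInf_le (genInv_bddBelow y) ⟨hylt, ht₀0⟩
  rw [Real.dist_eq, abs_of_nonneg (by linarith)]
  linarith

include hm h0 in
lemma genInv_sandwich {u v x : ℝ} (hx : x ∈ Ioo (h u) (h v)) (hv1 : v ≤ 1) :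
    genInv h x ∈ Icc (max u 0) (min v 1) := by
  have hhu : (0:ℝ) ≤ h u := by
    rcases lt_or_ge u 0 with hu | hu
    · rw [h0 u hu]
    · rw [← h0 (-1) (by norm_num)]; exact hm (by linarith)
  have hx0 : (0:ℝ) ≤ x := le_of_lt (lt_of_le_of_lt hhu hx.1)
  have hv0 : (0:ℝ) ≤ v := by
    by_contra hv
    rw [h0 v (by linarith)] at hx
    linarith [hx.2]
  have hx1 : x < h 1 := lt_of_lt_of_le hx.2 (hm hv1)
  have hg : genInv h x = sInf ({t | x < h t} ∩ Ici 0) := if_pos hx1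
  constructor
  · rw [hg]
    refine max_le ?_ ?_
    · refine le_csInf (genInv_nonempty hx1) fun t ht => ?_
      by_contra htu
      exact absurd (hx.1.trans ht.1) (not_lt.2 (hm (le_of_not_ge htu)))
    · exact le_csInf (genInv_nonempty hx1) fun t ht => ht.2
  · rw [hg]
    refine le_min ?_ ?_
    · exact csInf_le (genInv_bddBelow x) ⟨hx.2, hv0⟩
    · exact csInf_le (genInv_bddBelow x) ⟨hx1, mem_Ici.2 zero_le_one⟩

include hm in
lemma genInv_intervalIntegrable {φ : ℝ → ℝ} (hφ : Continuous φ) (a b : ℝ) :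
    IntervalIntegrable (fun x => φ (genInv h x)) MeasureTheory.volume a b := by
  obtain ⟨C, hC⟩ : ∃ C, ∀ y ∈ Icc (0:ℝ) 1, ‖φ y‖ ≤ C :=
    isCompact_Icc.exists_bound_of_continuousOn hφ.continuousOn
  rw [intervalIntegrable_iff]
  refine MeasureTheory.Integrable.mono'
    (MeasureTheory.integrableOn_const (C := C) measure_Ioc_lt_top.ne) ?_ ?_
  · exact (hφ.measurable.comp (genInv_mono (h := h)).measurable).aestronglyMeasurable
  · exact MeasureTheory.ae_of_all _ fun x => hC _ (genInv_mem01 x)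

include hm h0 in
lemma genInv_piece {φ : ℝ → ℝ} (hφ : Continuous φ) {u v : ℝ} (huv : u ≤ v) (hv1 : v ≤ 1)
    {ξ ε : ℝ} (hξ : ∀ s ∈ Icc (max u 0) (min v 1), |φ s - φ ξ| ≤ ε) :
    |(∫ x in (h u)..(h v), φ (genInv h x)) - φ ξ * (h v - h u)| ≤ ε * (h v - h u) := by
  rcases lt_or_ge v 0 with hv | hv
  · rw [h0 v hv, h0 u (lt_of_le_of_lt huv hv)]
    simp
  · -- ε is nonneg since the interval is nonempty
    have hu1 : u ≤ 1 := huv.trans hv1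
    have hne : max u 0 ≤ min v 1 := by
      rcases le_total u 0 with h'|h' <;> rcases le_total v 1 with h''|h'' <;>
        simp [max_eq_left, max_eq_right, min_eq_left, min_eq_right, *] <;> linarith
    have hεpos : 0 ≤ ε := le_trans (abs_nonneg _) (hξ _ ⟨le_rfl, hne⟩)
    have hab : h u ≤ h v := hm huv
    have hint : IntervalIntegrable (fun x => φ (genInv h x)) MeasureTheory.volume (h u) (h v) :=
      genInv_intervalIntegrable hm hφ _ _
    have hconst : φ ξ * (h v - h u) = ∫ _ in (h u)..(h v), φ ξ := by
      rw [intervalIntegral.integral_const, smul_eq_mul]; ring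
    rw [hconst, ← intervalIntegral.integral_sub hint intervalIntegrable_const]
    have hbound : ∀ᵐ x ∂MeasureTheory.volume, x ∈ Set.uIoc (h u) (h v) →
        ‖φ (genInv h x) - φ ξ‖ ≤ ε := by
      have hsing : ∀ᵐ x ∂(MeasureTheory.volume : MeasureTheory.Measure ℝ), x ≠ h v := by
        rw [MeasureTheory.ae_iff]
        simpa using Real.volume_singleton (x := h v)
      filter_upwards [hsing] with x hx hmem
      rw [uIoc_of_le hab] at hmem
      have hxIoo : x ∈ Ioo (h u) (h v) := ⟨hmem.1, lt_of_le_of_ne hmem.2 hx⟩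
      exact hξ _ (genInv_sandwich hm h0 hxIoo hv1)
    calc ‖∫ x in (h u)..(h v), (φ (genInv h x) - φ ξ)‖
        ≤ ε * |h v - h u| := intervalIntegral.norm_integral_le_of_norm_le_const_ae hbound
      _ = ε * (h v - h u) := by rw [abs_of_nonneg (by linarith)]

end genInv

section partition

/-- uniform partition points of `[-1,1]` -/
def pt (n : ℕ) (i : ℕ) : ℝ := -1 + 2 * i / n

lemma pt_zero (n : ℕ) : pt n 0 = -1 := by simp [pt]

lemma pt_last {n : ℕ} (hn : 0 < n) : pt n n = 1 := by
  have h' : (n:ℝ) ≠ 0 := Nat.cast_ne_zero.2 hn.ne'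
  rw [pt, mul_div_assoc, div_self h']
  norm_num

lemma pt_step {n : ℕ} (hn : 0 < n) (i : ℕ) : pt n (i + 1) - pt n i = 2 / n := by
  have h' : (n:ℝ) ≠ 0 := Nat.cast_ne_zero.2 hn.ne'
  simp only [pt]; push_cast
  ring

lemma pt_mono {n : ℕ} (hn : 0 < n) : Monotone (pt n) := by
  have : (0:ℝ) < n := Nat.cast_pos.2 hn
  intro i j hij
  unfold pt
  have hij' : (i:ℝ) ≤ j := Nat.cast_le.2 hij
  have : 2 * (i:ℝ) / n ≤ 2 * (j:ℝ) / n := by gcongr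
  linarith

lemma clamp_mem (r : ℝ) : max 0 (min 1 r) ∈ Icc (0:ℝ) 1 := by
  constructor
  · exact le_max_left _ _
  · rcases le_total 1 r with h|h <;> rcases le_total r 0 with h'|h' <;>
      simp [min_eq_left, min_eq_right, max_eq_left, max_eq_right, *] <;> linarith

variable {h : ℝ → ℝ} (hm : Monotone h) (h0 : ∀ t < (0:ℝ), h t = 0)

include hm h0 in
lemma genInv_sum_approx {φ : ℝ → ℝ} (hφ : Continuous φ) {n : ℕ} (hn : 0 < n) {ε : ℝ}
    (hunif : ∀ s₁ ∈ Icc (0:ℝ) 1, ∀ s₂ ∈ Icc (0:ℝ) 1, |s₁ - s₂| ≤ 2 / n → |φ s₁ - φ s₂| ≤ ε) :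
    |(∫ x in (0:ℝ)..(h 1), φ (genInv h x)) -
      ∑ i ∈ Finset.range n, φ (max 0 (min 1 (pt n (i+1)))) * (h (pt n (i+1)) - h (pt n i))| ≤
    ε * h 1 := by
  have hεpos : 0 ≤ ε := by
    have := hunif 0 ⟨le_rfl, zero_le_one⟩ 0 ⟨le_rfl, zero_le_one⟩ (by simp; positivity)
    simpa using le_trans (abs_nonneg _) this
  have hsplit : (∫ x in (0:ℝ)..(h 1), φ (genInv h x)) =
      ∑ i ∈ Finset.range n, ∫ x in (h (pt n i))..(h (pt n (i+1))), φ (genInv h x) := by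
    have := intervalIntegral.sum_integral_adjacent_intervals
      (a := fun i => h (pt n i)) (n := n)
      (fun k _ => genInv_intervalIntegrable hm hφ _ _)
    have e0 : h (pt n 0) = 0 := by rw [pt_zero]; exact h0 (-1) (by norm_num)
    have e1 : pt n n = 1 := pt_last hn
    rw [← e1, ← e0]
    exact this.symm
  rw [hsplit, ← Finset.sum_sub_distrib]
  refine le_trans (Finset.abs_sum_le_sum_abs _ _) ?_
  have hlast : ε * h 1 = ∑ i ∈ Finset.range n, ε * (h (pt n (i+1)) - h (pt n i)) := by
    rw [← Finset.mul_sum, Finset.sum_range_sub (fun i => h (pt n i)), pt_zero, pt_last hn,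
      h0 (-1) (by norm_num)]
    ring
  rw [hlast]
  refine Finset.sum_le_sum fun i _ => ?_
  have hstep : pt n i ≤ pt n (i+1) := pt_mono hn (Nat.le_succ i)
  have hle1 : pt n (i+1) ≤ 1 := by
    rw [← pt_last hn]; exact pt_mono hn (Nat.succ_le_of_lt (Finset.mem_range.mp ‹_›))
  refine genInv_piece hm h0 hφ hstep hle1 fun s hs => ?_
  -- s ∈ [max (pt n i) 0, min (pt n (i+1)) 1]
  have hs01 : s ∈ Icc (0:ℝ) 1 := ⟨le_trans (le_max_right _ _) hs.1,
    le_trans hs.2 (min_le_right _ _)⟩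
  have hcl : max 0 (min 1 (pt n (i+1))) ∈ Icc (0:ℝ) 1 := clamp_mem _
  refine hunif s hs01 _ hcl ?_
  -- |s - clamp| ≤ 2/n
  have h1 : pt n i ≤ s := le_trans (le_max_left _ _) hs.1
  have h2 : s ≤ min (pt n (i+1)) 1 := hs.2
  have hv0 : (0:ℝ) ≤ pt n (i+1) := by
    by_contra hneg
    push_neg at hneg
    have : s ≤ pt n (i+1) := le_trans h2 (min_le_left _ _)
    linarith [hs01.1]
  have hclval : max 0 (min 1 (pt n (i+1))) = min 1 (pt n (i+1)) :=
    max_eq_right (le_min zero_le_one hv0)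
  have hsle : s ≤ max 0 (min 1 (pt n (i+1))) := by
    rw [hclval, min_comm]; exact h2
  have hclle : max 0 (min 1 (pt n (i+1))) ≤ pt n (i+1) := by
    rw [hclval]; exact min_le_right _ _
  have hd := pt_step hn i
  rw [abs_of_nonpos (by linarith)]
  linarith

end partition

section linf

/-- the space of bounded functions on `[0,1]` -/
abbrev LInf : Type := ↥(lp (fun _ : ↥(Set.Icc (0:ℝ) 1) => ℝ) (⊤ : ℝ≥0∞))

/-- indicator of `[0,t]` as an element of `LInf` -/
def indic (t : ℝ) : LInf :=
  ⟨fun s => if (s:ℝ) ≤ t then 1 else 0, memℓp_infty ⟨1, by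
    rintro x ⟨s, rfl⟩
    dsimp only
    split_ifs <;> simp⟩⟩

lemma indic_apply (t : ℝ) (s : ↥(Set.Icc (0:ℝ) 1)) :
    (indic t : ∀ _ : ↥(Set.Icc (0:ℝ) 1), ℝ) s = if (s:ℝ) ≤ t then 1 else 0 := rfl

lemma indic_neg {t : ℝ} (ht : t < 0) : indic t = 0 := by
  apply lp.ext
  funext s
  rw [indic_apply]
  have : ¬ (s:ℝ) ≤ t := by
    have := s.2.1
    intro hc
    linarith
  simp [this]

/-- the natural embedding of `C([0,1])` into `LInf` -/
def jmap : C(Set.Icc (0:ℝ) 1, ℝ) →ₗ[ℝ] LInf where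
  toFun f := ⟨fun s => f s, memℓp_infty ⟨‖f‖, by
    rintro x ⟨s, rfl⟩
    exact f.norm_coe_le_norm s⟩⟩
  map_add' f g := by apply lp.ext; funext s; rfl
  map_smul' c f := by apply lp.ext; funext s; rfl

lemma jmap_apply (f : C(Set.Icc (0:ℝ) 1, ℝ)) (s : ↥(Set.Icc (0:ℝ) 1)) :
    (jmap f : ∀ _ : ↥(Set.Icc (0:ℝ) 1), ℝ) s = f s := rfl

lemma jmap_inj : Function.Injective jmap := by
  intro f g hfg
  ext s
  have := congrFun (congrArg (Subtype.val) hfg) s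
  exact this

lemma norm_le_jmap (f : C(Set.Icc (0:ℝ) 1, ℝ)) : ‖f‖ ≤ ‖jmap f‖ := by
  rw [ContinuousMap.norm_le _ (norm_nonneg _)]
  intro s
  have := lp.norm_apply_le_norm (E := fun _ : ↥(Set.Icc (0:ℝ) 1) => ℝ)
    ENNReal.top_ne_zero (jmap f) s
  exact this

/-- a Hahn-Banach extension of `F` to `LInf` -/
lemma exists_extension (F : C(Set.Icc (0:ℝ) 1, ℝ) →L[ℝ] ℝ) :
    ∃ G : LInf →L[ℝ] ℝ, ∀ f, G (jmap f) = F f := by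
  set p : Submodule ℝ LInf := LinearMap.range jmap with hp
  set e := LinearEquiv.ofInjective jmap jmap_inj with he
  set φ₀ : p →ₗ[ℝ] ℝ := F.toLinearMap.comp e.symm.toLinearMap with hφ₀
  have hkey : ∀ y : p, jmap (e.symm y) = (y : LInf) := by
    intro y
    conv_rhs => rw [← e.apply_symm_apply y]
    rfl
  have hbound : ∀ y : p, ‖φ₀ y‖ ≤ ‖F‖ * ‖y‖ := by
    intro y
    have h1 : ‖φ₀ y‖ ≤ ‖F‖ * ‖e.symm y‖ := F.le_opNorm _
    have h2 : ‖e.symm y‖ ≤ ‖(y : LInf)‖ := by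
      rw [← hkey y]
      exact norm_le_jmap _
    calc ‖φ₀ y‖ ≤ ‖F‖ * ‖e.symm y‖ := h1
      _ ≤ ‖F‖ * ‖(y : LInf)‖ := by gcongr
      _ = ‖F‖ * ‖y‖ := rfl
  set φ : p →L[ℝ] ℝ := φ₀.mkContinuous ‖F‖ hbound with hφ
  obtain ⟨G, hG, -⟩ := exists_extension_norm_eq p φ
  refine ⟨G, fun f => ?_⟩
  have hmem : jmap f ∈ p := LinearMap.mem_range_self _ f
  have := hG ⟨jmap f, hmem⟩
  rw [this]
  show φ₀ _ = F f
  rw [hφ₀]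
  simp only [LinearMap.comp_apply, ContinuousLinearMap.coe_coe, LinearEquiv.coe_toLinearMap]
  congr 1
  apply jmap_inj
  rw [hkey ⟨jmap f, hmem⟩]

end linf

section beta

variable (G : LInf →L[ℝ] ℝ)

/-- the "distribution function" of the functional `G` -/
def betaF : ℝ → ℝ := fun t => G (indic t)

lemma betaF_neg {t : ℝ} (ht : t < 0) : betaF G t = 0 := by
  rw [betaF, indic_neg ht, map_zero]

lemma betaF_var : eVariationOn (betaF G) univ ≤ ENNReal.ofReal ‖G‖ := by
  refine iSup_le ?_
  rintro ⟨n, u, hu, -⟩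
  have key : ∑ i ∈ Finset.range n, |betaF G (u (i+1)) - betaF G (u i)| ≤ ‖G‖ := by
    set c : ℕ → ℝ := fun i => if betaF G (u i) ≤ betaF G (u (i+1)) then 1 else -1 with hc
    have habs : ∀ i, |betaF G (u (i+1)) - betaF G (u i)|
        = c i * (betaF G (u (i+1)) - betaF G (u i)) := by
      intro i
      rw [hc]
      dsimp only
      split_ifs with hle
      · rw [abs_of_nonneg (by linarith)]; ring
      · rw [abs_of_neg (by push_neg at hle; linarith)]; ring
    set v : LInf := ∑ i ∈ Finset.range n, c i • (indic (u (i+1)) - indic (u i)) with hv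
    have hGv : G v = ∑ i ∈ Finset.range n, c i * (betaF G (u (i+1)) - betaF G (u i)) := by
      rw [hv, map_sum]
      refine Finset.sum_congr rfl fun i _ => ?_
      rw [map_smul, map_sub, smul_eq_mul]
      rfl
    have hvnorm : ‖v‖ ≤ 1 := by
      refine lp.norm_le_of_forall_le zero_le_one fun s => ?_
      have hcoe : (v : ∀ _ : ↥(Set.Icc (0:ℝ) 1), ℝ) s
          = ∑ i ∈ Finset.range n, c i * ((if (s:ℝ) ≤ u (i+1) then (1:ℝ) else 0)
            - (if (s:ℝ) ≤ u i then (1:ℝ) else 0)) := by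
        rw [hv, lp.coeFn_sum, Finset.sum_apply]
        refine Finset.sum_congr rfl fun i _ => ?_
        rw [lp.coeFn_smul, Pi.smul_apply, lp.coeFn_sub, Pi.sub_apply, smul_eq_mul,
          indic_apply, indic_apply]
      rw [hcoe, Real.norm_eq_abs]
      set a : ℕ → ℝ := fun i => if (s:ℝ) ≤ u i then 1 else 0 with ha
      have hamono : ∀ i, a i ≤ a (i+1) := by
        intro i
        rw [ha]
        dsimp only
        split_ifs with h1 h2
        · exact le_rfl
        · exact absurd (h1.trans (hu (Nat.le_succ i))) h2
        · norm_num
        · exact le_rfl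
      calc |∑ i ∈ Finset.range n, c i * (a (i+1) - a i)|
          ≤ ∑ i ∈ Finset.range n, |c i * (a (i+1) - a i)| := Finset.abs_sum_le_sum_abs _ _
        _ ≤ ∑ i ∈ Finset.range n, (a (i+1) - a i) := by
            refine Finset.sum_le_sum fun i _ => ?_
            rw [abs_mul]
            have hci : |c i| = 1 := by rw [hc]; dsimp only; split_ifs <;> simp
            rw [hci, one_mul, abs_of_nonneg (by linarith [hamono i])]
        _ = a n - a 0 := Finset.sum_range_sub a n
        _ ≤ 1 := by
            have h1 : a n ≤ 1 := by rw [ha]; dsimp only; split_ifs <;> norm_num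
            have h2 : 0 ≤ a 0 := by rw [ha]; dsimp only; split_ifs <;> norm_num
            linarith
    calc ∑ i ∈ Finset.range n, |betaF G (u (i+1)) - betaF G (u i)|
        = G v := by rw [hGv]; exact Finset.sum_congr rfl fun i _ => habs i
      _ ≤ |G v| := le_abs_self _
      _ ≤ ‖G‖ * ‖v‖ := G.le_opNorm v
      _ ≤ ‖G‖ := by
          calc ‖G‖ * ‖v‖ ≤ ‖G‖ * 1 := by
                refine mul_le_mul_of_nonneg_left hvnorm (norm_nonneg G)
          _ = ‖G‖ := mul_one _
  calc ∑ i ∈ Finset.range n, edist (betaF G (u (i+1))) (betaF G (u i))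
      = ENNReal.ofReal (∑ i ∈ Finset.range n, |betaF G (u (i+1)) - betaF G (u i)|) := by
        rw [ENNReal.ofReal_sum_of_nonneg (fun i _ => abs_nonneg _)]
        refine Finset.sum_congr rfl fun i _ => ?_
        rw [edist_dist, Real.dist_eq]
    _ ≤ ENNReal.ofReal ‖G‖ := ENNReal.ofReal_le_ofReal key

lemma betaF_lbv : LocallyBoundedVariationOn (betaF G) univ := by
  refine BoundedVariationOn.locallyBoundedVariationOn ?_
  exact ne_top_of_le_ne_top ENNReal.ofReal_ne_top (betaF_var G)

/-- positive part: the total variation function -/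
def Pfun : ℝ → ℝ := fun t => variationOnFromTo (betaF G) univ (-1) t

/-- negative part -/
def Nfun : ℝ → ℝ := fun t => Pfun G t - betaF G t

lemma Pfun_mono : Monotone (Pfun G) :=
  monotoneOn_univ.mp (variationOnFromTo.monotoneOn (betaF_lbv G) (mem_univ _))

lemma Nfun_mono : Monotone (Nfun G) := by
  have := variationOnFromTo.sub_self_monotoneOn (betaF_lbv G) (mem_univ (-1 : ℝ))
  exact monotoneOn_univ.mp this

lemma Pfun_neg {t : ℝ} (ht : t < 0) : Pfun G t = 0 := by
  have hconst : ∀ s : Set ℝ, (∀ x ∈ s, x < 0) → eVariationOn (betaF G) s = 0 := by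
    intro s hs
    refine eVariationOn.constant_on ?_
    rintro x ⟨x', hx', rfl⟩ y ⟨y', hy', rfl⟩
    rw [betaF_neg G (hs _ hx'), betaF_neg G (hs _ hy')]
  rcases le_total (-1 : ℝ) t with h1 | h1
  · rw [Pfun, variationOnFromTo.eq_of_le _ _ h1, hconst _ ?_, ENNReal.toReal_zero]
    rintro x ⟨-, -, hx2⟩
    exact lt_of_le_of_lt hx2 ht
  · rw [Pfun, variationOnFromTo.eq_of_ge _ _ h1, hconst _ ?_, ENNReal.toReal_zero, neg_zero]
    rintro x ⟨-, -, hx2⟩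
    linarith
lemma Nfun_neg {t : ℝ} (ht : t < 0) : Nfun G t = 0 := by
  rw [Nfun, Pfun_neg G ht, betaF_neg G ht, sub_zero]

lemma Pfun_nonneg (t : ℝ) : 0 ≤ Pfun G t := by
  rcases lt_or_ge t 0 with h | h
  · rw [Pfun_neg G h]
  · rw [← Pfun_neg G (show (-1:ℝ) < 0 by norm_num)]
    exact Pfun_mono G (by linarith)

lemma Nfun_nonneg (t : ℝ) : 0 ≤ Nfun G t := by
  rcases lt_or_ge t 0 with h | h
  · rw [Nfun_neg G h]
  · rw [← Nfun_neg G (show (-1:ℝ) < 0 by norm_num)]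
    exact Nfun_mono G (by linarith)

lemma betaF_eq_sub (t : ℝ) : betaF G t = Pfun G t - Nfun G t := by
  rw [Nfun]; ring

end beta

section mainsum

lemma clamp_proj (r : ℝ) :
    Set.projIcc 0 1 zero_le_one (max 0 (min 1 r)) = Set.projIcc 0 1 zero_le_one r := by
  rw [projIcc_of_mem _ (clamp_mem r)]
  exact Subtype.ext (by rw [coe_projIcc])

lemma Gsum_approx (G : LInf →L[ℝ] ℝ) (f : C(Set.Icc (0:ℝ) 1, ℝ)) {n : ℕ} (hn : 0 < n) {ε : ℝ}
    (hunif : ∀ s₁ s₂ : Set.Icc (0:ℝ) 1, |(s₁:ℝ) - (s₂:ℝ)| ≤ 2 / n → |f s₁ - f s₂| ≤ ε) :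
    |G (jmap f) - ∑ i ∈ Finset.range n,
        f (Set.projIcc 0 1 zero_le_one (pt n (i+1))) * (betaF G (pt n (i+1)) - betaF G (pt n i))|
      ≤ ‖G‖ * ε := by
  classical
  have hε : 0 ≤ ε := le_trans (abs_nonneg _)
      (hunif ⟨0, le_rfl, zero_le_one⟩ ⟨0, le_rfl, zero_le_one⟩ (by simp; positivity))
  set c : ℕ → ℝ := fun i => f (Set.projIcc 0 1 zero_le_one (pt n (i+1))) with hc
  set w : LInf := jmap f - ∑ i ∈ Finset.range n, c i • (indic (pt n (i+1)) - indic (pt n i))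
    with hw
  have hGw : G w = G (jmap f) - ∑ i ∈ Finset.range n,
      c i * (betaF G (pt n (i+1)) - betaF G (pt n i)) := by
    rw [hw, map_sub, map_sum]
    congr 1
    refine Finset.sum_congr rfl fun i _ => ?_
    rw [map_smul, map_sub, smul_eq_mul]
    rfl
  rw [← hGw]
  have hwnorm : ‖w‖ ≤ ε := by
    refine lp.norm_le_of_forall_le hε fun s => ?_
    set ι : ℕ → ℝ := fun i => if (s:ℝ) ≤ pt n i then 1 else 0 with hι
    have hcoe : (w : ∀ _ : ↥(Set.Icc (0:ℝ) 1), ℝ) s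
        = f s - ∑ i ∈ Finset.range n, c i * (ι (i+1) - ι i) := by
      rw [hw, lp.coeFn_sub, Pi.sub_apply, lp.coeFn_sum, Finset.sum_apply]
      congr 1
    have hs0 : (0:ℝ) ≤ (s:ℝ) := s.2.1
    have hs1 : (s:ℝ) ≤ 1 := s.2.2
    set i₀ := Nat.findGreatest (fun i => pt n i < (s:ℝ)) n with hi₀def
    have hP0 : pt n 0 < (s:ℝ) := by rw [pt_zero]; linarith
    have hi₀ : pt n i₀ < (s:ℝ) :=
      Nat.findGreatest_spec (P := fun i => pt n i < (s:ℝ)) (Nat.zero_le n) hP0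
    have hi₀n : i₀ ≤ n := Nat.findGreatest_le n
    have hi₀lt : i₀ < n := by
      rcases lt_or_eq_of_le hi₀n with h | h
      · exact h
      · exfalso; rw [h, pt_last hn] at hi₀; linarith
    have hsle : (s:ℝ) ≤ pt n (i₀ + 1) := by
      by_contra hcon
      push_neg at hcon
      exact Nat.findGreatest_is_greatest (P := fun i => pt n i < (s:ℝ))
        (Nat.lt_succ_self i₀) (Nat.succ_le_of_lt hi₀lt) hcon
    have hsum : ∑ i ∈ Finset.range n, c i * (ι (i+1) - ι i) = c i₀ := by
      rw [Finset.sum_eq_single_of_mem i₀ (Finset.mem_range.2 hi₀lt)]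
      · have h1 : ι (i₀ + 1) = 1 := if_pos hsle
        have h2 : ι i₀ = 0 := if_neg (not_le.2 hi₀)
        rw [h1, h2]; ring
      · intro i _ hne
        rcases lt_or_gt_of_ne hne with hlt | hgt
        · have hle : i + 1 ≤ i₀ := Nat.succ_le_of_lt hlt
          have e1 : ι (i+1) = 0 := if_neg (not_le.2 (lt_of_le_of_lt (pt_mono hn hle) hi₀))
          have e2 : ι i = 0 := if_neg (not_le.2
            (lt_of_le_of_lt (pt_mono hn (le_of_lt (Nat.lt_of_succ_le hle))) hi₀))
          rw [e1, e2]; ring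
        · have hle : i₀ + 1 ≤ i := Nat.succ_le_of_lt hgt
          have e1 : ι (i+1) = 1 := if_pos (hsle.trans (pt_mono hn (hle.trans (Nat.le_succ i))))
          have e2 : ι i = 1 := if_pos (hsle.trans (pt_mono hn hle))
          rw [e1, e2]; ring
    rw [hcoe, hsum, Real.norm_eq_abs]
    -- |f s - c i₀| ≤ ε by uniform continuity
    rw [hc]
    dsimp only
    refine hunif s _ ?_
    rw [coe_projIcc]
    set v := pt n (i₀ + 1) with hvdef
    have hv0 : (0:ℝ) ≤ v := le_trans hs0 hsle
    have hcl : max 0 (min 1 v) = min 1 v := max_eq_right (le_min zero_le_one hv0)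
    have h1 : (s:ℝ) ≤ min 1 v := le_min hs1 hsle
    have h2 : min 1 v ≤ v := min_le_right _ _
    have hd := pt_step hn i₀
    rw [hcl, abs_of_nonpos (by linarith)]
    linarith
  calc |G w| ≤ ‖G‖ * ‖w‖ := G.le_opNorm w
    _ ≤ ‖G‖ * ε := mul_le_mul_of_nonneg_left hwnorm (norm_nonneg G)

end mainsum

end RieszAux

/-- Riesz-type representation: every continuous linear functional `F` on `C([0,1], ℝ)`
(with the sup norm) is the difference of two Riemann integrals of reparametrizations:
there are compact intervals `[c₁,d₁]`, `[c₂,d₂]` and right-continuous non-decreasing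
maps `g₁† : [c₁,d₁] → [0,1]`, `g₂† : [c₂,d₂] → [0,1]` with
`F f = ∫_{c₁}^{d₁} f (g₁† x) dx − ∫_{c₂}^{d₂} f (g₂† x) dx` for all continuous `f`. -/
theorem stmt10 (F : C(Set.Icc (0:ℝ) 1, ℝ) →L[ℝ] ℝ) :
    ∃ (c₁ d₁ c₂ d₂ : ℝ) (g₁ g₂ : ℝ → ℝ),
      c₁ ≤ d₁ ∧ c₂ ≤ d₂ ∧
      MonotoneOn g₁ (Set.Icc c₁ d₁) ∧ MonotoneOn g₂ (Set.Icc c₂ d₂) ∧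
      (∀ x ∈ Set.Ico c₁ d₁, ContinuousWithinAt g₁ (Set.Ici x) x) ∧
      (∀ x ∈ Set.Ico c₂ d₂, ContinuousWithinAt g₂ (Set.Ici x) x) ∧
      (∀ x ∈ Set.Icc c₁ d₁, g₁ x ∈ Set.Icc (0:ℝ) 1) ∧
      (∀ x ∈ Set.Icc c₂ d₂, g₂ x ∈ Set.Icc (0:ℝ) 1) ∧
      ∀ f : C(Set.Icc (0:ℝ) 1, ℝ),
        F f = (∫ x in c₁..d₁, f (Set.projIcc 0 1 zero_le_one (g₁ x)))
            - (∫ x in c₂..d₂, f (Set.projIcc 0 1 zero_le_one (g₂ x))) := by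
  obtain ⟨G, hG⟩ := exists_extension F
  have hPm := Pfun_mono G
  have hNm := Nfun_mono G
  have hP0 : ∀ t < (0:ℝ), Pfun G t = 0 := fun t ht => Pfun_neg G ht
  have hN0 : ∀ t < (0:ℝ), Nfun G t = 0 := fun t ht => Nfun_neg G ht
  refine ⟨0, Pfun G 1, 0, Nfun G 1, genInv (Pfun G), genInv (Nfun G),
    Pfun_nonneg G 1, Nfun_nonneg G 1,
    genInv_mono.monotoneOn _, genInv_mono.monotoneOn _,
    fun x hx => genInv_rightCont hPm hx.2,
    fun x hx => genInv_rightCont hNm hx.2,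
    fun x _ => genInv_mem01 x, fun x _ => genInv_mem01 x, fun f => ?_⟩
  set φ : ℝ → ℝ := fun r => f (Set.projIcc 0 1 zero_le_one r) with hφdef
  have hφc : Continuous φ := f.continuous.comp continuous_projIcc
  refine eq_of_forall_dist_le fun ε εpos => ?_
  set K : ℝ := ‖G‖ + Pfun G 1 + Nfun G 1 + 1 with hKdef
  have hKpos : 0 < K := by
    have := norm_nonneg G; have := Pfun_nonneg G 1; have := Nfun_nonneg G 1
    rw [hKdef]; linarith
  set q : ℝ := ε / K with hqdef
  have hqpos : 0 < q := div_pos εpos hKpos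
  obtain ⟨δ, δpos, hδ⟩ := f.uniform_continuity q hqpos
  obtain ⟨n, hngt⟩ := exists_nat_gt (2 / δ)
  have h2δ : 0 < 2 / δ := by positivity
  have hnpos : 0 < n := by
    by_contra hcon
    push_neg at hcon
    interval_cases n
    · simp at hngt; linarith
  have hnR : (0:ℝ) < n := Nat.cast_pos.2 hnpos
  have h2n : 2 / (n:ℝ) < δ := by
    rw [div_lt_iff₀ hnR]
    rw [div_lt_iff₀ δpos] at hngt
    linarith [mul_comm δ (n:ℝ)]
  -- uniform continuity statements
  have hunifc : ∀ s₁ s₂ : Set.Icc (0:ℝ) 1, |(s₁:ℝ) - (s₂:ℝ)| ≤ 2 / n → |f s₁ - f s₂| ≤ q := by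
    intro s₁ s₂ hd
    have : dist s₁ s₂ < δ := by
      rw [Subtype.dist_eq, Real.dist_eq]
      exact lt_of_le_of_lt hd h2n
    have := hδ this
    rw [Real.dist_eq] at this
    exact this.le
  have hunifφ : ∀ s₁ ∈ Set.Icc (0:ℝ) 1, ∀ s₂ ∈ Set.Icc (0:ℝ) 1,
      |s₁ - s₂| ≤ 2 / n → |φ s₁ - φ s₂| ≤ q := by
    intro s₁ hs₁ s₂ hs₂ hd
    have e₁ : φ s₁ = f ⟨s₁, hs₁⟩ := by rw [hφdef]; dsimp only; rw [projIcc_of_mem _ hs₁]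
    have e₂ : φ s₂ = f ⟨s₂, hs₂⟩ := by rw [hφdef]; dsimp only; rw [projIcc_of_mem _ hs₂]
    rw [e₁, e₂]
    exact hunifc _ _ hd
  have A := Gsum_approx G f hnpos hunifc
  rw [hG f] at A
  have B := genInv_sum_approx hPm hP0 hφc hnpos hunifφ
  have C := genInv_sum_approx hNm hN0 hφc hnpos hunifφ
  -- identify the sums
  have hterm : ∀ i, f (Set.projIcc 0 1 zero_le_one (pt n (i+1)))
      * (betaF G (pt n (i+1)) - betaF G (pt n i))
      = φ (max 0 (min 1 (pt n (i+1)))) * (Pfun G (pt n (i+1)) - Pfun G (pt n i))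
        - φ (max 0 (min 1 (pt n (i+1)))) * (Nfun G (pt n (i+1)) - Nfun G (pt n i)) := by
    intro i
    have e : φ (max 0 (min 1 (pt n (i+1)))) = f (Set.projIcc 0 1 zero_le_one (pt n (i+1))) := by
      rw [hφdef]; dsimp only; rw [clamp_proj]
    rw [e, betaF_eq_sub, betaF_eq_sub]
    ring
  have hsums : ∑ i ∈ Finset.range n, f (Set.projIcc 0 1 zero_le_one (pt n (i+1)))
      * (betaF G (pt n (i+1)) - betaF G (pt n i))
      = (∑ i ∈ Finset.range n,
          φ (max 0 (min 1 (pt n (i+1)))) * (Pfun G (pt n (i+1)) - Pfun G (pt n i)))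
        - ∑ i ∈ Finset.range n,
          φ (max 0 (min 1 (pt n (i+1)))) * (Nfun G (pt n (i+1)) - Nfun G (pt n i)) := by
    rw [← Finset.sum_sub_distrib]
    exact Finset.sum_congr rfl fun i _ => hterm i
  rw [hsums] at A
  -- final combination
  have key : ‖G‖ * q + q * Pfun G 1 + q * Nfun G 1 ≤ ε := by
    have h1 : ‖G‖ * q + q * Pfun G 1 + q * Nfun G 1 = q * (K - 1) := by
      rw [hKdef]; ring
    have h2 : q * (K - 1) ≤ q * K := by
      refine mul_le_mul_of_nonneg_left (by linarith) hqpos.le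
    have h3 : q * K = ε := by
      rw [hqdef, div_mul_cancel₀ _ hKpos.ne']
    rw [h1]; linarith
  rw [Real.dist_eq]
  rw [abs_le] at A B C ⊢
  constructor <;> linarith [A.1, A.2, B.1, B.2, C.1, C.2]
end

section
/- If X is a normed vector space and f : X → ℝ is continuous such that there exist open sets O ∋ x and O' ∋ 0 and a compact interval C with all difference quotients (f(y+rz)−f(y))/r ∈ C for y ∈ O, z ∈ O', and small r > 0 (i.e., f is locally Lipschitzian at x), then f is locally Lipschitz at x: there exist a neighbourhood U of x and k ≥ 0 with |f(a) − f(b)| ≤ k·‖a − b‖ for all a, b ∈ U. -/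
open Set Topology

/-- On a normed space, a function that is locally Lipschitzian at `x` (all difference
quotients `(f (y + r • z) − f y)/r` for `y` near `x`, `z` near `0` and small `r > 0`
lie in a fixed compact interval) is locally Lipschitz at `x`. -/
theorem stmt11 {X : Type*} [NormedAddCommGroup X] [NormedSpace ℝ X]
    (f : X → ℝ) (hf : Continuous f) (x : X)
    (O O' : Set X) (hO : IsOpen O) (hxO : x ∈ O) (hO' : IsOpen O') (h0O' : (0 : X) ∈ O')
    (c₁ c₂ δ : ℝ) (hδ : 0 < δ)
    (hbd : ∀ y ∈ O, ∀ z ∈ O', ∀ r : ℝ, 0 < r → r < δ →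
      (f (y + r • z) - f y) / r ∈ Set.Icc c₁ c₂) :
    ∃ U ∈ 𝓝 x, ∃ k : ℝ, 0 ≤ k ∧ ∀ a ∈ U, ∀ b ∈ U, |f a - f b| ≤ k * ‖a - b‖ := by
  obtain ⟨ε₁, hε₁, hball₁⟩ := Metric.isOpen_iff.1 hO x hxO
  obtain ⟨ε₂, hε₂, hball₂⟩ := Metric.isOpen_iff.1 hO' 0 h0O'
  set ρ : ℝ := min ε₁ (δ * ε₂ / 8) with hρdef
  have hρ : 0 < ρ := lt_min hε₁ (by positivity)
  set M : ℝ := max |c₁| |c₂| with hM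
  have hM0 : 0 ≤ M := le_trans (abs_nonneg c₁) (le_max_left _ _)
  refine ⟨Metric.ball x ρ, Metric.ball_mem_nhds x hρ, 2 * M / ε₂, by positivity, ?_⟩
  intro a ha b hb
  rcases eq_or_ne a b with rfl | hab
  · simp
  -- use difference quotient from a to b (swap roles so a = y + r z gives f a - f b? )
  have key : ∀ p q : X, p ∈ Metric.ball x ρ → q ∈ Metric.ball x ρ → p ≠ q →
      f q - f p ≤ (2 * M / ε₂) * ‖q - p‖ := by
    intro p q hp hq hpq
    have hnorm : 0 < ‖q - p‖ := by
      rw [norm_pos_iff, sub_ne_zero]; exact hpq.symm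
    set r : ℝ := 2 * ‖q - p‖ / ε₂ with hr
    have hr0 : 0 < r := by positivity
    set z : X := (ε₂ / 2 / ‖q - p‖) • (q - p) with hz
    have hzn : ‖z‖ = ε₂ / 2 := by
      rw [hz, norm_smul, Real.norm_eq_abs, abs_of_pos (by positivity)]
      field_simp
    have hzO' : z ∈ O' := by
      apply hball₂
      simp [Metric.mem_ball, dist_zero_right, hzn]
      linarith
    have hpO : p ∈ O := hball₁ (Metric.ball_subset_ball (min_le_left _ _) hp)
    have hrδ : r < δ := by
      have h1 : ‖q - p‖ < 2 * ρ := by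
        have := dist_triangle q x p
        rw [← dist_eq_norm]
        calc dist q p ≤ dist q x + dist x p := dist_triangle q x p
          _ < ρ + ρ := add_lt_add (Metric.mem_ball.1 hq) (by rw [dist_comm]; exact Metric.mem_ball.1 hp)
          _ = 2 * ρ := by ring
      have h2 : ρ ≤ δ * ε₂ / 8 := min_le_right _ _
      rw [hr, div_lt_iff₀ hε₂]
      nlinarith
    have hrz : p + r • z = q := by
      rw [hz, hr, smul_smul]
      have : 2 * ‖q - p‖ / ε₂ * (ε₂ / 2 / ‖q - p‖) = 1 := by
        field_simp
      rw [this, one_smul]; abel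
    have := hbd p hpO z hzO' r hr0 hrδ
    rw [hrz] at this
    have hle : (f q - f p) / r ≤ M := le_trans this.2 (le_trans (le_abs_self _) (le_max_right _ _))
    have : f q - f p ≤ M * r := by
      rw [div_le_iff₀ hr0] at hle; linarith
    calc f q - f p ≤ M * r := this
      _ = (2 * M / ε₂) * ‖q - p‖ := by rw [hr]; field_simp
  have h1 := key a b ha hb hab
  have h2 := key b a hb ha hab.symm
  rw [abs_sub_le_iff]
  constructor
  · rw [show ‖a - b‖ = ‖a - b‖ from rfl]
    have : ‖a - b‖ = ‖b - a‖ := norm_sub_rev a b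
    linarith [h2]
  · linarith [h1, (norm_sub_rev b a).symm ▸ h1]
end

section
/- Suppose f : X → ℝ is continuous on a Hausdorff topological vector space, locally Lipschitzian at x, and Lf(x,x') is a single point for all x' ∈ X. Then the map x' ↦ Lf(x,x') : X → ℝ is linear and continuous; i.e., f has a Gateaux derivative at x given by Df(x,−) = Lf(x,−). -/
open Filter Topology Classical
open Pointwise

variable {X : Type*} [AddCommGroup X] [Module ℝ X] [TopologicalSpace X]
  [IsTopologicalAddGroup X] [ContinuousSMul ℝ X] [T2Space X]

set_option maxHeartbeats 1000000 in
/-- If `f` is continuous, locally Lipschitzian at `x`, and `Lf(x,x')` is a single point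
`D x'` for every direction `x'`, then `D = Lf(x,−)` is a continuous linear functional:
`f` has a Gateaux derivative at `x` given by `Df(x,−) = Lf(x,−)`. -/
theorem stmt13 (f : X → ℝ) (hf : Continuous f) (x : X)
    (O O' : Set X) (hO : IsOpen O) (hxO : x ∈ O) (hO' : IsOpen O') (h0O' : (0 : X) ∈ O')
    (c₁ c₂ δ : ℝ) (hδ : 0 < δ)
    (hbd : ∀ y ∈ O, ∀ z ∈ O', ∀ r : ℝ, 0 < r → r < δ →
      (f (y + r • z) - f y) / r ∈ Set.Icc c₁ c₂)
    (D : X → ℝ) (hD : ∀ x' : X, LIntv f x x' = {D x'}) :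
    IsLinearMap ℝ D ∧ Continuous D ∧
      ∀ x' : X, Tendsto (fun r : ℝ => (f (x + r • x') - f x) / r)
        (𝓝[>] (0 : ℝ)) (𝓝 (D x')) := by
  -- The fundamental convergence fact: the full difference-quotient filter converges to `D x'`.
  have key : ∀ x' : X,
      Tendsto (fun p : (X × X) × ℝ => (f (p.1.1 + p.2 • p.1.2) - f p.1.1) / p.2)
        (((𝓝 x) ×ˢ (𝓝 x')) ×ˢ (𝓝[>] (0 : ℝ))) (𝓝 (D x')) := by
    intro x'
    have h := hD x'
    rw [LIntv] at h
    by_cases hb : (dqF f x x').IsBounded (· ≤ ·) ∧ (dqF f x x').IsBounded (· ≥ ·)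
    · rw [if_pos hb, Set.Icc_eq_singleton_iff] at h
      have hb1 : (dqF f x x').IsBoundedUnder (· ≤ ·) id := by
        simpa [Filter.IsBoundedUnder, Filter.map_id] using hb.1
      have hb2 : (dqF f x x').IsBoundedUnder (· ≥ ·) id := by
        simpa [Filter.IsBoundedUnder, Filter.map_id] using hb.2
      have ht : Tendsto id (dqF f x x') (𝓝 (D x')) :=
        tendsto_of_liminf_eq_limsup h.1 h.2 hb1 hb2
      simpa [dqF, Function.comp] using ht.comp Filter.tendsto_map
    · rw [if_neg hb] at h
      have h1 : (D x' + 1 : ℝ) ∈ ({D x'} : Set ℝ) := h ▸ Set.mem_univ _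
      rw [Set.mem_singleton_iff] at h1
      linarith
  -- Directional limit (third conclusion)
  have hdir : ∀ x' : X, Tendsto (fun r : ℝ => (f (x + r • x') - f x) / r)
      (𝓝[>] (0 : ℝ)) (𝓝 (D x')) := by
    intro x'
    have hφ : Tendsto (fun r : ℝ => (((x, x') : X × X), r)) (𝓝[>] (0 : ℝ))
        (((𝓝 x) ×ˢ (𝓝 x')) ×ˢ (𝓝[>] (0 : ℝ))) :=
      (tendsto_const_nhds.prodMk tendsto_const_nhds).prodMk tendsto_id
    exact ((key x').comp hφ).congr fun _ => rfl
  -- Additivity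
  have hadd : ∀ x' x'' : X, D (x' + x'') = D x' + D x'' := by
    intro x' x''
    set G := (((𝓝 x) ×ˢ (𝓝 x')) ×ˢ (𝓝 x'')) ×ˢ (𝓝[>] (0 : ℝ)) with hG
    have hy : Tendsto (fun q : ((X × X) × X) × ℝ => q.1.1.1) G (𝓝 x) :=
      tendsto_fst.comp (tendsto_fst.comp tendsto_fst)
    have hz : Tendsto (fun q : ((X × X) × X) × ℝ => q.1.1.2) G (𝓝 x') :=
      tendsto_snd.comp (tendsto_fst.comp tendsto_fst)
    have hw : Tendsto (fun q : ((X × X) × X) × ℝ => q.1.2) G (𝓝 x'') :=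
      tendsto_snd.comp tendsto_fst
    have hr : Tendsto (fun q : ((X × X) × X) × ℝ => q.2) G (𝓝[>] (0 : ℝ)) := tendsto_snd
    have hr0 : Tendsto (fun q : ((X × X) × X) × ℝ => q.2) G (𝓝 (0 : ℝ)) :=
      hr.mono_right nhdsWithin_le_nhds
    have hy' : Tendsto (fun q : ((X × X) × X) × ℝ => q.1.1.1 + q.2 • q.1.1.2) G (𝓝 x) := by
      have := hy.add (hr0.smul hz)
      simpa using this
    have t1 : Tendsto (fun q : ((X × X) × X) × ℝ =>
        (f (q.1.1.1 + q.2 • (q.1.1.2 + q.1.2)) - f q.1.1.1) / q.2) G (𝓝 (D (x' + x''))) :=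
      ((key (x' + x'')).comp (((hy.prodMk (hz.add hw)).prodMk hr))).congr fun _ => rfl
    have t2 : Tendsto (fun q : ((X × X) × X) × ℝ =>
        (f (q.1.1.1 + q.2 • q.1.1.2) - f q.1.1.1) / q.2) G (𝓝 (D x')) :=
      ((key x').comp ((hy.prodMk hz).prodMk hr)).congr fun _ => rfl
    have t3 : Tendsto (fun q : ((X × X) × X) × ℝ =>
        (f ((q.1.1.1 + q.2 • q.1.1.2) + q.2 • q.1.2) - f (q.1.1.1 + q.2 • q.1.1.2)) / q.2)
        G (𝓝 (D x'')) :=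
      ((key x'').comp ((hy'.prodMk hw).prodMk hr)).congr fun _ => rfl
    have t23 := t2.add t3
    have heq : ∀ q : ((X × X) × X) × ℝ,
        (f (q.1.1.1 + q.2 • (q.1.1.2 + q.1.2)) - f q.1.1.1) / q.2 =
        (f (q.1.1.1 + q.2 • q.1.1.2) - f q.1.1.1) / q.2 +
        (f ((q.1.1.1 + q.2 • q.1.1.2) + q.2 • q.1.2) - f (q.1.1.1 + q.2 • q.1.1.2)) / q.2 := by
      intro q
      rw [smul_add, ← add_assoc, ← add_div]
      ring_nf
    exact tendsto_nhds_unique (t1.congr heq) t23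
  -- Negation
  have hneg : ∀ x' : X, D (-x') = -D x' := by
    intro x'
    set G := ((𝓝 x) ×ˢ (𝓝 x')) ×ˢ (𝓝[>] (0 : ℝ)) with hG
    have hy : Tendsto (fun q : (X × X) × ℝ => q.1.1) G (𝓝 x) := tendsto_fst.comp tendsto_fst
    have hz : Tendsto (fun q : (X × X) × ℝ => q.1.2) G (𝓝 x') := tendsto_snd.comp tendsto_fst
    have hr : Tendsto (fun q : (X × X) × ℝ => q.2) G (𝓝[>] (0 : ℝ)) := tendsto_snd
    have hr0 : Tendsto (fun q : (X × X) × ℝ => q.2) G (𝓝 (0 : ℝ)) :=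
      hr.mono_right nhdsWithin_le_nhds
    have hy' : Tendsto (fun q : (X × X) × ℝ => q.1.1 + q.2 • q.1.2) G (𝓝 x) := by
      have := hy.add (hr0.smul hz)
      simpa using this
    have t1 : Tendsto (fun q : (X × X) × ℝ =>
        (f ((q.1.1 + q.2 • q.1.2) + q.2 • (-q.1.2)) - f (q.1.1 + q.2 • q.1.2)) / q.2)
        G (𝓝 (D (-x'))) :=
      ((key (-x')).comp ((hy'.prodMk hz.neg).prodMk hr)).congr fun _ => rfl
    have t2 : Tendsto (fun q : (X × X) × ℝ =>
        -((f (q.1.1 + q.2 • q.1.2) - f q.1.1) / q.2)) G (𝓝 (-D x')) :=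
      (((key x').comp ((hy.prodMk hz).prodMk hr)).congr fun _ => rfl).neg
    have heq : ∀ q : (X × X) × ℝ,
        (f ((q.1.1 + q.2 • q.1.2) + q.2 • (-q.1.2)) - f (q.1.1 + q.2 • q.1.2)) / q.2 =
        -((f (q.1.1 + q.2 • q.1.2) - f q.1.1) / q.2) := by
      intro q
      have : (q.1.1 + q.2 • q.1.2) + q.2 • (-q.1.2) = q.1.1 := by
        rw [smul_neg]; abel
      rw [this, ← neg_div]
      ring_nf
    exact tendsto_nhds_unique (t1.congr heq) t2
  -- Positive homogeneity
  have hpos : ∀ c : ℝ, 0 < c → ∀ x' : X, D (c • x') = c * D x' := by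
    intro c hc x'
    set G := ((𝓝 x) ×ˢ (𝓝 x')) ×ˢ (𝓝[>] (0 : ℝ)) with hG
    have hy : Tendsto (fun q : (X × X) × ℝ => q.1.1) G (𝓝 x) := tendsto_fst.comp tendsto_fst
    have hz : Tendsto (fun q : (X × X) × ℝ => q.1.2) G (𝓝 x') := tendsto_snd.comp tendsto_fst
    have hr : Tendsto (fun q : (X × X) × ℝ => q.2) G (𝓝[>] (0 : ℝ)) := tendsto_snd
    have hcr : Tendsto (fun q : (X × X) × ℝ => c * q.2) G (𝓝[>] (0 : ℝ)) := by
      apply tendsto_nhdsWithin_of_tendsto_nhds_of_eventually_within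
      · have : Tendsto (fun q : (X × X) × ℝ => c * q.2) G (𝓝 (c * 0)) :=
          (hr.mono_right nhdsWithin_le_nhds).const_mul c
        simpa using this
      · filter_upwards [hr self_mem_nhdsWithin] with q hq
        exact mul_pos hc hq
    have t1 : Tendsto (fun q : (X × X) × ℝ =>
        (f (q.1.1 + q.2 • (c • q.1.2)) - f q.1.1) / q.2) G (𝓝 (D (c • x'))) :=
      ((key (c • x')).comp ((hy.prodMk (hz.const_smul c)).prodMk hr)).congr fun _ => rfl
    have t2 : Tendsto (fun q : (X × X) × ℝ =>
        c * ((f (q.1.1 + (c * q.2) • q.1.2) - f q.1.1) / (c * q.2))) G (𝓝 (c * D x')) :=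
      (((key x').comp ((hy.prodMk hz).prodMk hcr)).congr fun _ => rfl).const_mul c
    have heq : ∀ q : (X × X) × ℝ,
        (f (q.1.1 + q.2 • (c • q.1.2)) - f q.1.1) / q.2 =
        c * ((f (q.1.1 + (c * q.2) • q.1.2) - f q.1.1) / (c * q.2)) := by
      intro q
      rw [smul_smul, mul_comm q.2 c, mul_div_assoc' c _ (c * q.2),
        mul_div_mul_left _ _ (ne_of_gt hc)]
    exact tendsto_nhds_unique (t1.congr heq) t2
  -- Zero
  have hzero : D 0 = 0 := by
    have := hadd 0 0
    rw [add_zero] at this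
    linarith
  -- Full linearity
  have hlin : IsLinearMap ℝ D := by
    refine ⟨hadd, ?_⟩
    intro c x'
    rcases lt_trichotomy c 0 with hc | hc | hc
    · have h1 : c • x' = -((-c) • x') := by rw [neg_smul, neg_neg]
      rw [h1, hneg, hpos (-c) (by linarith)]
      simp [smul_eq_mul]
    · subst hc; simp [hzero]
    · rw [hpos c hc]; simp [smul_eq_mul]
  -- Bound on O'
  have hbound : ∀ z ∈ O', D z ∈ Set.Icc c₁ c₂ := by
    intro z hz
    have hev : ∀ᶠ q : (X × X) × ℝ in ((𝓝 x) ×ˢ (𝓝 z)) ×ˢ (𝓝[>] (0 : ℝ)),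
        (f (q.1.1 + q.2 • q.1.2) - f q.1.1) / q.2 ∈ Set.Icc c₁ c₂ := by
      have h1 : ∀ᶠ q : (X × X) × ℝ in ((𝓝 x) ×ˢ (𝓝 z)) ×ˢ (𝓝[>] (0 : ℝ)),
          q ∈ (O ×ˢ O') ×ˢ Set.Ioo 0 δ := by
        apply Filter.prod_mem_prod
        · exact Filter.prod_mem_prod (hO.mem_nhds hxO) (hO'.mem_nhds hz)
        · exact Ioo_mem_nhdsGT_of_mem ⟨le_refl _, hδ⟩
      filter_upwards [h1] with q hq
      exact hbd q.1.1 hq.1.1 q.1.2 hq.1.2 q.2 hq.2.1 hq.2.2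
    exact isClosed_Icc.mem_of_tendsto (key z) hev
  -- Continuity at 0
  have hM : ∀ z ∈ O', |D z| ≤ max |c₁| |c₂| := fun z hz =>
    abs_le_max_abs_abs (hbound z hz).1 (hbound z hz).2
  set M := max |c₁| |c₂| with hMdef
  have hM0 : 0 ≤ M := le_trans (abs_nonneg _) (le_max_left _ _)
  have hcont0 : Tendsto D (𝓝 (0 : X)) (𝓝 (0 : ℝ)) := by
    rw [Metric.tendsto_nhds]
    intro ε hε
    set t := ε / (M + 1) with htdef
    have ht : 0 < t := div_pos hε (by linarith)
    have hmem : t • O' ∈ 𝓝 (0 : X) :=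
      (hO'.smul₀ (ne_of_gt ht)).mem_nhds ⟨0, h0O', smul_zero t⟩
    filter_upwards [hmem] with z hz
    obtain ⟨w, hw, rfl⟩ := hz
    have : D (t • w) = t * D w := by
      rw [hlin.map_smul]; simp [smul_eq_mul]
    rw [Real.dist_eq, sub_zero, this, abs_mul, abs_of_pos ht]
    calc t * |D w| ≤ t * M := by
          exact mul_le_mul_of_nonneg_left (hM w hw) (le_of_lt ht)
      _ < t * (M + 1) := by nlinarith
      _ = ε := by rw [htdef]; field_simp
  -- Continuity everywhere
  have hcont : Continuous D := by
    rw [continuous_iff_continuousAt]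
    intro a
    have hsub : Tendsto (fun z : X => z - a) (𝓝 a) (𝓝 (0 : X)) := by
      have h0 : Tendsto (fun z : X => z - a) (𝓝 a) (𝓝 (a - a)) :=
        (continuous_id.sub continuous_const).tendsto a
      simpa using h0
    have h1 : Tendsto (fun z : X => D a + D (z - a)) (𝓝 a) (𝓝 (D a + 0)) :=
      tendsto_const_nhds.add (hcont0.comp hsub)
    have h2 : ∀ z : X, D a + D (z - a) = D z := by
      intro z
      rw [← hadd a (z - a), show a + (z - a) = z by abel]
    have := h1.congr h2
    rw [add_zero] at this
    exact this
  exact ⟨hlin, hcont, hdir⟩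
end

section
/- Let f : X → ℝ be locally Lipschitzian on a Hausdorff topological vector space. Then for all x, x' ∈ X, the upper endpoint of Lf(x,x') equals the generalized Clarke directional derivative computed with fixed direction: limsup_{y→x, z→x', r→0⁺} (f(y+rz)−f(y))/r = limsup_{y→x, r→0⁺} (f(y+rx')−f(y))/r, and dually for liminf. -/
open Filter Topology Classical

variable {X : Type*} [AddCommGroup X] [Module ℝ X] [TopologicalSpace X]
  [IsTopologicalAddGroup X] [ContinuousSMul ℝ X] [T2Space X]


private lemma real_limsup_neg {α : Type*} (F : Filter α) (u : α → ℝ) :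
    Filter.limsup (fun a => -u a) F = - Filter.liminf u F := by
  have hset : -{a : ℝ | ∀ᶠ x in F, a ≤ u x} = {a : ℝ | ∀ᶠ x in F, -u x ≤ a} := by
    ext b
    simp only [Set.mem_neg, Set.mem_setOf_eq, neg_le]
  rw [Filter.limsup_eq, Filter.liminf_eq, Real.sInf_def, ← hset, neg_neg]

set_option maxHeartbeats 1000000 in
private lemma aux_limsup (f : X → ℝ)
    (hLL : ∀ x : X, ∃ (O O' : Set X) (c₁ c₂ δ : ℝ), IsOpen O ∧ x ∈ O ∧ IsOpen O' ∧
      (0 : X) ∈ O' ∧ 0 < δ ∧ ∀ y ∈ O, ∀ z ∈ O', ∀ r : ℝ, 0 < r → r < δ →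
        (f (y + r • z) - f y) / r ∈ Set.Icc c₁ c₂) (x x' : X) :
    Filter.limsup (fun p : (X × X) × ℝ => (f (p.1.1 + p.2 • p.1.2) - f p.1.1) / p.2)
      (((𝓝 x) ×ˢ (𝓝 x')) ×ˢ (𝓝[>] (0 : ℝ))) =
    Filter.limsup (fun p : X × ℝ => (f (p.1 + p.2 • x') - f p.1) / p.2)
      ((𝓝 x) ×ˢ (𝓝[>] (0 : ℝ))) := by
  obtain ⟨O, O', c₁, c₂, δ, hO, hxO, hO', h0O', hδ, hb⟩ := hLL x
  set F : Filter ((X × X) × ℝ) := ((𝓝 x) ×ˢ (𝓝 x')) ×ˢ (𝓝[>] (0 : ℝ)) with hF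
  set G : Filter (X × ℝ) := (𝓝 x) ×ˢ (𝓝[>] (0 : ℝ)) with hG
  set g3 : (X × X) × ℝ → ℝ := fun p => (f (p.1.1 + p.2 • p.1.2) - f p.1.1) / p.2 with hg3
  set g2 : X × ℝ → ℝ := fun p => (f (p.1 + p.2 • x') - f p.1) / p.2 with hg2
  set π : (X × X) × ℝ → X × ℝ := fun p => (p.1.1, p.2) with hπdef
  have hπ : Tendsto π F G := (tendsto_fst.comp tendsto_fst).prodMk tendsto_snd
  -- find t₀ > 0 with t₀ • x' ∈ O'
  obtain ⟨t₀, ht₀O', ht₀⟩ : ∃ t₀ : ℝ, t₀ • x' ∈ O' ∧ 0 < t₀ := by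
    have hc : Tendsto (fun t : ℝ => t • x') (𝓝 0) (𝓝 (0 : X)) := by
      have h : Tendsto (fun t : ℝ => t • x') (𝓝 0) (𝓝 ((0 : ℝ) • x')) :=
        (continuous_id.smul (continuous_const : Continuous fun _ : ℝ => x')).tendsto
        (0 : ℝ)
      rwa [zero_smul] at h
    have h1 : ∀ᶠ t in 𝓝[>] (0 : ℝ), t • x' ∈ O' :=
      ((hc.eventually (hO'.eventually_mem h0O')).filter_mono nhdsWithin_le_nhds)
    exact (h1.and self_mem_nhdsWithin).exists
  -- E1 : fixed-direction quotients bounded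
  have hE1 : ∀ᶠ p in G, g2 p ∈ Set.Icc (c₁ / t₀) (c₂ / t₀) := by
    have hy : ∀ᶠ p in G, p.1 ∈ O := (hO.eventually_mem hxO).prod_inl _
    have hr : ∀ᶠ p in G, p.2 ∈ Set.Ioo 0 (δ * t₀) :=
      Filter.Eventually.prod_inr
        (eventually_mem_set.mpr (Ioo_mem_nhdsGT_of_mem ⟨le_refl 0, by positivity⟩)) _
    filter_upwards [hy, hr] with p hpO hpr
    obtain ⟨hr0, hrδ⟩ := hpr
    have hq := hb p.1 hpO (t₀ • x') ht₀O' (p.2 / t₀) (by positivity)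
      (by rw [div_lt_iff₀ ht₀]; linarith)
    have hsm : (p.2 / t₀) • (t₀ • x') = p.2 • x' := by
      rw [smul_smul]; congr 1; field_simp
    rw [hsm] at hq
    have hval : g2 p = ((f (p.1 + p.2 • x') - f p.1) / (p.2 / t₀)) / t₀ := by
      rw [div_div, div_mul_cancel₀ _ (ne_of_gt ht₀)]
    rw [hval]
    exact ⟨by gcongr; exact hq.1, by gcongr; exact hq.2⟩
  -- E2 : the z-perturbation is uniformly small
  have hE2 : ∀ ε : ℝ, 0 < ε → ∀ᶠ p in F, |g3 p - g2 (π p)| ≤ ε := by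
    intro ε hε
    set D : ℝ := |c₁| + |c₂| + 1 with hD
    have hD0 : 0 < D := by positivity
    set t : ℝ := min 1 (ε / D) with ht
    have ht0 : 0 < t := lt_min one_pos (by positivity)
    have ht1 : t ≤ 1 := min_le_left _ _
    have htD : t ≤ ε / D := min_le_right _ _
    have hmul : ∀ c : ℝ, |c| ≤ D → |t * c| ≤ ε := by
      intro c hc
      have h1 : |t * c| = t * |c| := by rw [abs_mul, abs_of_pos ht0]
      have h2 : t * |c| ≤ (ε / D) * D :=
        mul_le_mul htD hc (abs_nonneg c) (by positivity)
      rw [h1]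
      calc t * |c| ≤ (ε / D) * D := h2
        _ = ε := div_mul_cancel₀ ε (ne_of_gt hD0)
    have habs₁ : |c₁| ≤ D := by rw [hD]; linarith [abs_nonneg c₂]
    have habs₂ : |c₂| ≤ D := by rw [hD]; linarith [abs_nonneg c₁]
    have htc₂ : t * c₂ ≤ ε := le_trans (le_abs_self _) (hmul c₂ habs₂)
    have htc₁ : -ε ≤ t * c₁ := by
      have h := (abs_le.1 (hmul c₁ habs₁)).1
      linarith
    -- eventual facts
    have ha : ∀ᶠ p in F, p.1.1 + p.2 • x' ∈ O := by
      have hcont : Continuous fun p : (X × X) × ℝ => p.1.1 + p.2 • x' :=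
        (continuous_fst.fst.add (continuous_snd.smul continuous_const))
      have htend : Tendsto (fun p : (X × X) × ℝ => p.1.1 + p.2 • x') F (𝓝 x) := by
        have h1 : Tendsto (fun p : (X × X) × ℝ => p.1.1 + p.2 • x') (𝓝 ((x, x'), 0))
            (𝓝 x) := by simpa using hcont.tendsto ((x, x'), 0)
        refine h1.mono_left ?_
        rw [hF, nhds_prod_eq, nhds_prod_eq]
        exact prod_mono le_rfl nhdsWithin_le_nhds
      exact htend.eventually (hO.eventually_mem hxO)
    have hbz : ∀ᶠ p in F, t⁻¹ • (p.1.2 - x') ∈ O' := by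
      have hcont : Continuous fun z : X => t⁻¹ • (z - x') :=
        ((continuous_id.sub continuous_const).const_smul _)
      have htend : Tendsto (fun z : X => t⁻¹ • (z - x')) (𝓝 x') (𝓝 (0 : X)) := by
        have := hcont.tendsto x'
        simpa using this
      exact ((htend.eventually (hO'.eventually_mem h0O')).prod_inr _).prod_inl _
    have hcr : ∀ᶠ p in F, p.2 ∈ Set.Ioo 0 δ :=
      Filter.Eventually.prod_inr
        (eventually_mem_set.mpr (Ioo_mem_nhdsGT_of_mem ⟨le_refl 0, hδ⟩)) _
    filter_upwards [ha, hbz, hcr] with p hpa hpw hpr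
    obtain ⟨hr0, hrδ⟩ := hpr
    set y' : X := p.1.1 + p.2 • x' with hy'
    set w : X := t⁻¹ • (p.1.2 - x') with hw
    have hz : p.1.2 = x' + t • w := by
      rw [hw, smul_inv_smul₀ (ne_of_gt ht0)]; abel
    have hA : p.1.1 + p.2 • p.1.2 = y' + (p.2 * t) • w := by
      rw [hz, hy', smul_add, smul_smul]; abel
    have hrt0 : 0 < p.2 * t := by positivity
    have hrtδ : p.2 * t < δ := by nlinarith
    have hq := hb y' hpa w hpw (p.2 * t) hrt0 hrtδ
    have hdiff : g3 p - g2 (π p) = t * ((f (y' + (p.2 * t) • w) - f y') / (p.2 * t)) := by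
      rw [hg3, hg2, hπdef]
      simp only
      rw [hA, ← hy', div_sub_div_same]
      have hp2 : p.2 ≠ 0 := ne_of_gt hr0
      field_simp
      ring
    rw [hdiff]
    rw [abs_le]
    constructor
    · nlinarith [hq.1, hq.2]
    · nlinarith [hq.1, hq.2]
    -- boundedness facts
  have hBG_le : G.IsBoundedUnder (· ≤ ·) g2 :=
    ⟨c₂ / t₀, eventually_map.2 (hE1.mono fun p hp => hp.2)⟩
  have hBG_ge : G.IsBoundedUnder (· ≥ ·) g2 :=
    ⟨c₁ / t₀, eventually_map.2 (hE1.mono fun p hp => hp.1)⟩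
  have hE1F : ∀ᶠ p in F, g2 (π p) ∈ Set.Icc (c₁ / t₀) (c₂ / t₀) := hπ.eventually hE1
  have hBF_le : F.IsBoundedUnder (· ≤ ·) g3 := by
    refine ⟨c₂ / t₀ + 1, eventually_map.2 ?_⟩
    filter_upwards [hE2 1 one_pos, hE1F] with p h1 h2
    have := (abs_le.1 h1).2
    linarith [h2.2]
  have hBF_ge : F.IsBoundedUnder (· ≥ ·) g3 := by
    refine ⟨c₁ / t₀ - 1, eventually_map.2 ?_⟩
    filter_upwards [hE2 1 one_pos, hE1F] with p h1 h2
    have := (abs_le.1 h1).1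
    simp only [ge_iff_le]
    linarith [h2.1]
  -- inequality ≤
  have hle : limsup g3 F ≤ limsup g2 G := by
    by_contra hcon
    push_neg at hcon
    set ε : ℝ := (limsup g3 F - limsup g2 G) / 2 with hεdef
    have hε : 0 < ε := by rw [hεdef]; linarith
    have h1 := hE2 (ε / 2) (by positivity)
    have h2 : ∀ᶠ p in G, g2 p < limsup g2 G + ε / 2 :=
      eventually_lt_of_limsup_lt (by linarith) hBG_le
    have h3 := hπ.eventually h2
    have h4 : ∀ᶠ p in F, g3 p ≤ limsup g2 G + ε := by
      filter_upwards [h1, h3] with p hp1 hp3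
      have := (abs_le.1 hp1).2
      linarith
    have h5 : limsup g3 F ≤ limsup g2 G + ε :=
      limsup_le_of_le (hBF_ge.isCoboundedUnder_le) h4
    rw [hεdef] at h5
    linarith
  -- inequality ≥
  have hge : limsup g2 G ≤ limsup g3 F := by
    set emb : X × ℝ → (X × X) × ℝ := fun q => ((q.1, x'), q.2) with hemb
    have hembt : Tendsto emb G F :=
      (tendsto_fst.prodMk tendsto_const_nhds).prodMk tendsto_snd
    have hmapeq : limsup g2 G = limsup g3 (Filter.map emb G) := by
      rw [Filter.limsup, Filter.limsup, Filter.map_map]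
      rfl
    rw [hmapeq]
    refine Filter.limsup_le_limsup_of_le hembt ?_ hBF_le
    exact (hBG_ge.isCoboundedUnder_le :)
  exact le_antisymm hle hge

/-- For a locally Lipschitzian `f`, the triple limit superior (and inferior) defining
`Lf(x,x')` coincides with the double limit with the direction `x'` kept fixed:
`limsup_{y→x,z→x',r→0⁺} (f(y+rz)−f(y))/r = limsup_{y→x,r→0⁺} (f(y+rx')−f(y))/r`,
and dually for `liminf`. -/
theorem stmt14 (f : X → ℝ) (hf : Continuous f)
    (hLL : ∀ x : X, ∃ (O O' : Set X) (c₁ c₂ δ : ℝ), IsOpen O ∧ x ∈ O ∧ IsOpen O' ∧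
      (0 : X) ∈ O' ∧ 0 < δ ∧ ∀ y ∈ O, ∀ z ∈ O', ∀ r : ℝ, 0 < r → r < δ →
        (f (y + r • z) - f y) / r ∈ Set.Icc c₁ c₂) :
    ∀ x x' : X,
      Filter.limsup id (dqF f x x') =
        Filter.limsup (fun p : X × ℝ => (f (p.1 + p.2 • x') - f p.1) / p.2)
          ((𝓝 x) ×ˢ (𝓝[>] (0 : ℝ))) ∧
      Filter.liminf id (dqF f x x') =
        Filter.liminf (fun p : X × ℝ => (f (p.1 + p.2 • x') - f p.1) / p.2)
          ((𝓝 x) ×ˢ (𝓝[>] (0 : ℝ))) := by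
  intro x x'
  have hLL' : ∀ x : X, ∃ (O O' : Set X) (c₁ c₂ δ : ℝ), IsOpen O ∧ x ∈ O ∧ IsOpen O' ∧
      (0 : X) ∈ O' ∧ 0 < δ ∧ ∀ y ∈ O, ∀ z ∈ O', ∀ r : ℝ, 0 < r → r < δ →
        ((fun y => -f y) (y + r • z) - (fun y => -f y) y) / r ∈ Set.Icc c₁ c₂ := by
    intro x₀
    obtain ⟨O, O', c₁, c₂, δ, h1, h2, h3, h4, h5, h6⟩ := hLL x₀
    refine ⟨O, O', -c₂, -c₁, δ, h1, h2, h3, h4, h5, fun y hy z hz r hr hrδ => ?_⟩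
    have h := h6 y hy z hz r hr hrδ
    have heq : (-f (y + r • z) - -f y) / r = -((f (y + r • z) - f y) / r) := by ring
    simp only [heq]
    exact ⟨by linarith [h.2], by linarith [h.1]⟩
  constructor
  · simpa only [dqF, Filter.limsup, Filter.map_id] using aux_limsup f hLL x x'
  · have h1 := aux_limsup (fun y => -f y) hLL' x x'
    have e3 : (fun p : (X × X) × ℝ =>
        ((fun y => -f y) (p.1.1 + p.2 • p.1.2) - (fun y => -f y) p.1.1) / p.2) =
        fun p : (X × X) × ℝ => -((f (p.1.1 + p.2 • p.1.2) - f p.1.1) / p.2) := by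
      funext p; simp only; ring
    have e2 : (fun p : X × ℝ =>
        ((fun y => -f y) (p.1 + p.2 • x') - (fun y => -f y) p.1) / p.2) =
        fun p : X × ℝ => -((f (p.1 + p.2 • x') - f p.1) / p.2) := by
      funext p; simp only; ring
    rw [e3, e2, real_limsup_neg, real_limsup_neg, neg_inj] at h1
    simpa only [dqF, Filter.liminf, Filter.map_id] using h1
end

section
/- The logical-relation preservation for interval max: define on dual interval numbers max((x+εx'),(y+εy')) := (x+εx') if x > y (all of interval x strictly above interval y), (y+εy') if y > x, and [max(x⁻,y⁻), max(x⁺,y⁺)] + ε(x' ⊓ y') otherwise. Then for every rational r > 0, the ternary relation R^r (defined by R^r(I₁+εI₁', I₂+εI₂', I₃+εI₃') iff I₃ ⊑ I₁ ⊓ I₂ and r·I₃' has nonempty intersection with I₂−I₁) is preserved by max: R^r(x₁,x₂,x₃) and R^r(y₁,y₂,y₃) imply R^r(max(x₁,y₁), max(x₂,y₂), max(x₃,y₃)). -/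
/-- A dual interval number represented by endpoints: `((l, u), (l', u'))` stands for
`[l,u] + ε[l',u']`. -/
abbrev DualI := (ℝ × ℝ) × (ℝ × ℝ)

/-- Properness: both components are genuine (nonempty compact) intervals. -/
def IsProper (x : DualI) : Prop := x.1.1 ≤ x.1.2 ∧ x.2.1 ≤ x.2.2

/-- Interval max on dual interval numbers:
`max(x+εx', y+εy') = x+εx'` if the interval `x` is strictly above `y`, symmetrically if
`y` is strictly above `x`, and `[max(x⁻,y⁻), max(x⁺,y⁺)] + ε(x' ⊓ y')` otherwise, where
`x' ⊓ y'` is the convex hull of the union. -/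
noncomputable def dmax (x y : DualI) : DualI :=
  if y.1.2 < x.1.1 then x
  else if x.1.2 < y.1.1 then y
  else ((max x.1.1 y.1.1, max x.1.2 y.1.2), (min x.2.1 y.2.1, max x.2.2 y.2.2))

/-- The logical relation `R^r`: `R^r(I₁+εI₁', I₂+εI₂', I₃+εI₃')` iff `I₃ ⊑ I₁ ⊓ I₂`
(reverse inclusion: the convex hull of `I₁ ∪ I₂` is contained in `[l₃,u₃]`) and
`r·I₃'` has nonempty intersection with `I₂ − I₁ = [l₂−u₁, u₂−l₁]`. -/
def Rr (r : ℝ) (a b c : DualI) : Prop :=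
  c.1.1 ≤ min a.1.1 b.1.1 ∧ max a.1.2 b.1.2 ≤ c.1.2 ∧
    r * c.2.1 ≤ b.1.2 - a.1.1 ∧ b.1.1 - a.1.2 ≤ r * c.2.2

set_option maxHeartbeats 2000000 in
/-- The relation `R^r` is preserved by the interval max operation on dual interval
numbers, for every rational `r > 0`. -/
theorem stmt16 (r : ℚ) (hr : 0 < r) (x₁ x₂ x₃ y₁ y₂ y₃ : DualI)
    (hx₁ : IsProper x₁) (hx₂ : IsProper x₂) (hx₃ : IsProper x₃)
    (hy₁ : IsProper y₁) (hy₂ : IsProper y₂) (hy₃ : IsProper y₃)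
    (h1 : Rr (r : ℝ) x₁ x₂ x₃) (h2 : Rr (r : ℝ) y₁ y₂ y₃) :
    Rr (r : ℝ) (dmax x₁ y₁) (dmax x₂ y₂) (dmax x₃ y₃) := by

  have hr0 : (0:ℝ) ≤ (r:ℝ) := by positivity
  obtain ⟨a1, a2, a3, a4⟩ := h1
  obtain ⟨b1, b2, b3, b4⟩ := h2
  rw [le_min_iff] at a1 b1
  rw [max_le_iff] at a2 b2
  obtain ⟨a1l, a1r⟩ := a1
  obtain ⟨a2l, a2r⟩ := a2
  obtain ⟨b1l, b1r⟩ := b1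
  obtain ⟨b2l, b2r⟩ := b2
  obtain ⟨px1, px1'⟩ := hx₁
  obtain ⟨px2, px2'⟩ := hx₂
  obtain ⟨px3, px3'⟩ := hx₃
  obtain ⟨py1, py1'⟩ := hy₁
  obtain ⟨py2, py2'⟩ := hy₂
  obtain ⟨py3, py3'⟩ := hy₃
  have l1 := le_max_left x₁.1.2 y₁.1.2
  have l2 := le_max_right x₁.1.2 y₁.1.2
  have l3 := le_max_left x₂.1.2 y₂.1.2
  have l4 := le_max_right x₂.1.2 y₂.1.2
  have l5 := le_max_left x₃.1.2 y₃.1.2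
  have l6 := le_max_right x₃.1.2 y₃.1.2
  unfold Rr dmax
  split_ifs <;>
    refine ⟨?_, ?_, ?_, ?_⟩ <;>
    (try simp only [mul_min_of_nonneg _ _ hr0, mul_max_of_nonneg _ _ hr0,
      le_min_iff, max_le_iff]) <;>
    first
      | linarith
      | (constructorm* _ ∧ _ <;> linarith)
      | (rcases max_cases x₁.1.1 y₁.1.1 with ⟨e1, f1⟩ | ⟨e1, f1⟩ <;>
         rcases max_cases x₂.1.1 y₂.1.1 with ⟨e2, f2⟩ | ⟨e2, f2⟩ <;>
         rcases min_cases ((r:ℝ) * x₃.2.1) ((r:ℝ) * y₃.2.1) with ⟨e3, f3⟩ | ⟨e3, f3⟩ <;>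
         rcases max_cases ((r:ℝ) * x₃.2.2) ((r:ℝ) * y₃.2.2) with ⟨e4, f4⟩ | ⟨e4, f4⟩ <;>
         first
           | linarith
           | (constructorm* _ ∧ _ <;> linarith))
end

section
/- Let f : 𝕀ℝ×𝕀ℝ → 𝕀ℝ×𝕀ℝ (thought of as a function on dual interval numbers I + εI') be Scott continuous, standard-robust (its first output component depends only on the first input component) and standard maximal preserving (it maps inputs with singleton first component to outputs with singleton first component), and suppose that for all real x, x': In(f(x + εx')) ⊑ L⟨f⟩(x, x'), where ⟨f⟩(x) := St(f(x+ε0)) is the real function represented by f and L is the domain-theoretic directional derivative. Then f is locally consistent: for all rational intervals [a,b] (with a<b) and [c,d], In(f([a,b] + ε[c,d])) is consistent (has nonempty intersection) with the interval ((⟨f⟩(b) − ⟨f⟩(a))/(b−a))·[c,d]. -/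
open Filter Topology Classical

variable {X : Type*} [AddCommGroup X] [Module ℝ X] [TopologicalSpace X]
  [IsTopologicalAddGroup X] [ContinuousSMul ℝ X] [T2Space X]

open Set in
lemma cont_of_bounded (φ : ℝ → ℝ) (x c : ℝ)
    (h1 : (dqF φ x c).IsBounded (· ≤ ·)) (h2 : (dqF φ x c).IsBounded (· ≥ ·)) :
    ContinuousAt φ x := by
  obtain ⟨U, hU⟩ := h1
  obtain ⟨L, hL⟩ := h2
  rw [dqF, Filter.eventually_map] at hU hL
  have hbas : (((𝓝 x) ×ˢ (𝓝 c)) ×ˢ (𝓝[>] (0 : ℝ))).HasBasis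
      (fun p : (ℝ × ℝ) × ℝ => (0 < p.1.1 ∧ 0 < p.1.2) ∧ 0 < p.2)
      (fun p => (Metric.ball x p.1.1 ×ˢ Metric.ball c p.1.2) ×ˢ Ioo 0 p.2) :=
    (Metric.nhds_basis_ball.prod Metric.nhds_basis_ball).prod (nhdsGT_basis 0)
  obtain ⟨⟨⟨ε1, ε2⟩, ε3⟩, ⟨⟨hε1, hε2⟩, hε3⟩, H⟩ := hbas.eventually_iff.mp (hU.and hL)
  set K : ℝ := max |U| |L| with hK
  have hKq : ∀ y r : ℝ, ∀ z : ℝ, y ∈ Metric.ball x ε1 → z ∈ Metric.ball c ε2 →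
      r ∈ Ioo (0:ℝ) ε3 → |φ (y + r * z) - φ y| ≤ K * r := by
    intro y r z hy hz hr
    have := H (show ((y, z), r) ∈ _ from ⟨⟨hy, hz⟩, hr⟩)
    simp only [smul_eq_mul] at this
    have hq : |(φ (y + r * z) - φ y) / r| ≤ K := by
      rw [abs_le]
      constructor
      · nlinarith [this.2, neg_abs_le L, le_max_right |U| |L|]
      · nlinarith [this.1, le_abs_self U, le_max_left |U| |L|]
    have hr0 : (0:ℝ) < r := hr.1
    rw [abs_div, abs_of_pos hr0, div_le_iff₀ hr0] at hq
    linarith [hq]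
  -- choose direction z0
  set δ : ℝ := min ε2 ε3 with hδ
  have hδ0 : 0 < δ := lt_min hε2 hε3
  set z0 : ℝ := if c < 0 then c else c + δ / 2 with hz0def
  have hz0mem : z0 ∈ Metric.ball c ε2 := by
    by_cases hc : c < 0
    · simp [hz0def, hc, Metric.mem_ball, hε2]
    · simp only [hz0def, if_neg hc, Metric.mem_ball, Real.dist_eq]
      have : |c + δ / 2 - c| = δ / 2 := by rw [add_sub_cancel_left]; exact abs_of_pos (by linarith)
      rw [this]; calc δ / 2 < δ := by linarith
        _ ≤ ε2 := min_le_left _ _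
  have hz0ne : z0 ≠ 0 := by
    by_cases hc : c < 0
    · simp [hz0def, hc]; exact ne_of_lt hc
    · push_neg at hc
      simp only [hz0def, if_neg (not_lt.mpr hc)]
      positivity
  set ζ : ℝ := |z0| with hζ
  have hζ0 : 0 < ζ := abs_pos.mpr hz0ne
  -- pointwise estimate
  have key : ∀ y : ℝ, |y - x| < min ε1 (ε3 * ζ) → |φ y - φ x| ≤ (K / ζ) * |y - x| := by
    intro y hy
    rcases lt_trichotomy ((y - x) / z0) 0 with ht | ht | ht
    · -- r = -(y-x)/z0, base point y
      set r : ℝ := -((y - x) / z0) with hrdef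
      have hr0 : 0 < r := by rw [hrdef]; linarith
      have hrval : r = |y - x| / ζ := by
        rw [hrdef, hζ, ← abs_div]
        rw [abs_of_neg ht]
      have hrlt : r < ε3 := by
        rw [hrval, div_lt_iff₀ hζ0]
        exact lt_of_lt_of_le hy (min_le_right _ _)
      have hyb : y ∈ Metric.ball x ε1 := by
        rw [Metric.mem_ball, Real.dist_eq]
        exact lt_of_lt_of_le hy (min_le_left _ _)
      have := hKq y r z0 hyb hz0mem ⟨hr0, hrlt⟩
      have hxy : y + r * z0 = x := by
        rw [hrdef, neg_mul, div_mul_cancel₀ _ hz0ne]; ring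
      rw [hxy] at this
      rw [abs_sub_comm] at this
      calc |φ y - φ x| ≤ K * r := this
        _ = (K / ζ) * |y - x| := by rw [hrval]; ring
    · -- y = x
      have : y = x := by
        have := (div_eq_zero_iff.mp ht).resolve_right hz0ne
        linarith [sub_eq_zero.mp this]
      rw [this, sub_self, abs_zero, sub_self, abs_zero, mul_zero]
    · set r : ℝ := (y - x) / z0 with hrdef
      have hr0 : 0 < r := ht
      have hrval : r = |y - x| / ζ := by
        rw [hrdef, hζ, ← abs_div, abs_of_pos ht]
      have hrlt : r < ε3 := by
        rw [hrval, div_lt_iff₀ hζ0]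
        exact lt_of_lt_of_le hy (min_le_right _ _)
      have := hKq x r z0 (Metric.mem_ball_self hε1) hz0mem ⟨hr0, hrlt⟩
      have hxy : x + r * z0 = y := by rw [hrdef, div_mul_cancel₀ _ hz0ne]; ring
      rw [hxy] at this
      calc |φ y - φ x| ≤ K * r := this
        _ = (K / ζ) * |y - x| := by rw [hrval]; ring
  -- conclude continuity
  have hsq : Tendsto (fun y => |φ y - φ x|) (𝓝 x) (𝓝 0) := by
    apply squeeze_zero' (Filter.Eventually.of_forall fun y => abs_nonneg _)
    · have hmem : Metric.ball x (min ε1 (ε3 * ζ)) ∈ 𝓝 x :=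
        Metric.ball_mem_nhds x (lt_min hε1 (by positivity))
      filter_upwards [hmem] with y hy
      exact key y (by rwa [Metric.mem_ball, Real.dist_eq] at hy)
    · have : Tendsto (fun y : ℝ => (K / ζ) * |y - x|) (𝓝 x) (𝓝 ((K / ζ) * |x - x|)) := by
        apply Tendsto.const_mul
        exact (continuous_abs.comp (continuous_id.sub continuous_const)).tendsto x
      simpa using this
  have : Tendsto φ (𝓝 x) (𝓝 (φ x)) := by
    rw [tendsto_iff_dist_tendsto_zero]
    simpa [Real.dist_eq] using hsq
  exact this

open Set in
lemma freq_of_min (φ : ℝ → ℝ) (m x0 c : ℝ)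
    (hmin : ∀ᶠ y in 𝓝 x0, φ x0 - m * x0 ≤ φ y - m * y) :
    (∃ᶠ v in dqF φ x0 c, m * c ≤ v) ∧ (∃ᶠ v in dqF φ x0 c, v ≤ m * c) := by
  have t1 : Tendsto (fun r : ℝ => x0 + r * c) (𝓝[>] (0:ℝ)) (𝓝 x0) := by
    have h : Tendsto (fun r : ℝ => x0 + r * c) (𝓝 (0:ℝ)) (𝓝 (x0 + 0 * c)) :=
      tendsto_const_nhds.add (tendsto_id.mul tendsto_const_nhds)
    rw [zero_mul, add_zero] at h
    exact h.mono_left nhdsWithin_le_nhds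
  have t2 : Tendsto (fun r : ℝ => x0 - r * c) (𝓝[>] (0:ℝ)) (𝓝 x0) := by
    have h : Tendsto (fun r : ℝ => x0 - r * c) (𝓝 (0:ℝ)) (𝓝 (x0 - 0 * c)) :=
      tendsto_const_nhds.sub (tendsto_id.mul tendsto_const_nhds)
    rw [zero_mul, sub_zero] at h
    exact h.mono_left nhdsWithin_le_nhds
  have hpath1 : Tendsto (fun r : ℝ => ((x0, c), r)) (𝓝[>] (0:ℝ))
      ((𝓝 x0 ×ˢ 𝓝 c) ×ˢ 𝓝[>] (0:ℝ)) :=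
    (tendsto_const_nhds.prodMk tendsto_const_nhds).prodMk tendsto_id
  have hpath2 : Tendsto (fun r : ℝ => ((x0 - r * c, c), r)) (𝓝[>] (0:ℝ))
      ((𝓝 x0 ×ˢ 𝓝 c) ×ˢ 𝓝[>] (0:ℝ)) :=
    (t2.prodMk tendsto_const_nhds).prodMk tendsto_id
  constructor
  · rw [dqF, Filter.frequently_map]
    apply hpath1.frequently
    have ev : ∀ᶠ r in 𝓝[>] (0:ℝ),
        m * c ≤ (φ (x0 + r * c) - φ x0) / r := by
      filter_upwards [t1.eventually hmin, self_mem_nhdsWithin] with r h hr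
      rw [Set.mem_Ioi] at hr
      rw [le_div_iff₀ hr]
      nlinarith [h]
    exact (ev.mono fun r hr => by simpa [smul_eq_mul] using hr).frequently
  · rw [dqF, Filter.frequently_map]
    apply hpath2.frequently
    have ev : ∀ᶠ r in 𝓝[>] (0:ℝ),
        (φ ((x0 - r * c) + r * c) - φ (x0 - r * c)) / r ≤ m * c := by
      filter_upwards [t2.eventually hmin, self_mem_nhdsWithin] with r h hr
      rw [Set.mem_Ioi] at hr
      have hx : (x0 - r * c) + r * c = x0 := by ring
      rw [hx, div_le_iff₀ hr]
      nlinarith [h]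
    exact (ev.mono fun r hr => by simpa [smul_eq_mul] using hr).frequently

lemma freq_of_max (φ : ℝ → ℝ) (m x0 c : ℝ)
    (hmax : ∀ᶠ y in 𝓝 x0, φ y - m * y ≤ φ x0 - m * x0) :
    (∃ᶠ v in dqF φ x0 c, m * c ≤ v) ∧ (∃ᶠ v in dqF φ x0 c, v ≤ m * c) := by
  have hmin : ∀ᶠ y in 𝓝 x0, (fun t => -φ t) x0 - (-m) * x0 ≤ (fun t => -φ t) y - (-m) * y := by
    filter_upwards [hmax] with y h
    show -φ x0 - (-m) * x0 ≤ -φ y - (-m) * y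
    linarith
  obtain ⟨h1, h2⟩ := freq_of_min (fun t => -φ t) (-m) x0 c hmin
  have hmapeq : dqF (fun t : ℝ => -φ t) x0 c = Filter.map Neg.neg (dqF φ x0 c) := by
    rw [dqF, dqF, Filter.map_map]
    congr 1
    funext p
    simp only [Function.comp_apply]
    ring
  rw [hmapeq, Filter.frequently_map] at h1 h2
  constructor
  · exact h2.mono fun v hv => by linarith
  · exact h1.mono fun v hv => by linarith

open OrderDual in
/-- Let `f` be a Scott-continuous function on the domain of dual interval numbers
(`𝕀ℝ × 𝕀ℝ` ordered by reverse inclusion, modeled as `(Set ℝ)ᵒᵈ × (Set ℝ)ᵒᵈ`) that is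
standard-robust, standard maximal preserving, and represents the real function `φ`
(`St (f (x + ε0)) = {φ x}`). If `In (f (x + εx')) ⊑ Lφ(x,x')` for all real `x, x'`
(i.e. `LIntv φ x x' ⊆ In (f (x + εx'))`), then `f` is locally consistent: for all
rational intervals `[a,b]` (`a < b`) and `[c,d]`, `In (f ([a,b] + ε[c,d]))` has nonempty
intersection with `((φ b − φ a)/(b − a))·[c,d]`. -/
theorem stmt19 (f : (Set ℝ)ᵒᵈ × (Set ℝ)ᵒᵈ → (Set ℝ)ᵒᵈ × (Set ℝ)ᵒᵈ)
    (hscott : ScottContinuous f)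
    (hrobust : ∀ p q : (Set ℝ)ᵒᵈ × (Set ℝ)ᵒᵈ, p.1 = q.1 → (f p).1 = (f q).1)
    (hmax : ∀ p : (Set ℝ)ᵒᵈ × (Set ℝ)ᵒᵈ, (∃ x : ℝ, ofDual p.1 = ({x} : Set ℝ)) →
      ∃ y : ℝ, ofDual (f p).1 = ({y} : Set ℝ))
    (φ : ℝ → ℝ)
    (hφ : ∀ x : ℝ,
      ofDual (f (toDual ({x} : Set ℝ), toDual ({0} : Set ℝ))).1 = ({φ x} : Set ℝ))
    (hder : ∀ x x' : ℝ,
      LIntv φ x x' ⊆ ofDual (f (toDual ({x} : Set ℝ), toDual ({x'} : Set ℝ))).2) :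
    ∀ a b c d : ℚ, (a : ℝ) < b → (c : ℝ) ≤ d →
      (ofDual (f (toDual (Set.Icc (a : ℝ) (b : ℝ)),
          toDual (Set.Icc (c : ℝ) (d : ℝ)))).2 ∩
        ((fun t => ((φ b - φ a) / ((b : ℝ) - a)) * t) '' Set.Icc (c : ℝ) (d : ℝ))).Nonempty := by
  
  intro a b c d hab hcd
  have hba : (b : ℝ) - a ≠ 0 := sub_ne_zero.mpr (ne_of_gt hab)
  set m : ℝ := (φ b - φ a) / ((b : ℝ) - a) with hm
  have key : ∃ x0 : ℝ, x0 ∈ Set.Icc (a : ℝ) (b : ℝ) ∧ m * c ∈ LIntv φ x0 (c : ℝ) := by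
    by_cases hball : ∀ x ∈ Set.Icc (a : ℝ) (b : ℝ),
        (dqF φ x (c : ℝ)).IsBounded (· ≤ ·) ∧ (dqF φ x (c : ℝ)).IsBounded (· ≥ ·)
    · have hcont : ContinuousOn (fun t => φ t - m * t) (Set.Icc (a : ℝ) (b : ℝ)) := fun t ht =>
        ((cont_of_bounded φ t c (hball t ht).1 (hball t ht).2).sub
          (continuousAt_const.mul continuousAt_id)).continuousWithinAt
      have hmul : m * ((b : ℝ) - a) = φ b - φ a := by
        rw [hm]; exact div_mul_cancel₀ _ hba
      have heq : φ (a : ℝ) - m * a = φ (b : ℝ) - m * b := by nlinarith [hmul]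
      obtain ⟨x0, hx0, hext⟩ := exists_isLocalExtr_Ioo hab hcont heq
      have hx0' : x0 ∈ Set.Icc (a : ℝ) (b : ℝ) := Set.Ioo_subset_Icc_self hx0
      have hfreq : (∃ᶠ v in dqF φ x0 (c : ℝ), m * c ≤ v) ∧
          (∃ᶠ v in dqF φ x0 (c : ℝ), v ≤ m * c) := by
        rcases hext with hmin | hmax
        · exact freq_of_min φ m x0 c (hmin.mono fun y hy => hy)
        · exact freq_of_max φ m x0 c (hmax.mono fun y hy => hy)
      refine ⟨x0, hx0', ?_⟩
      have hb := hball x0 hx0'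
      rw [LIntv, if_pos hb]
      have hb1 : (dqF φ x0 (c : ℝ)).IsBoundedUnder (· ≤ ·) id := by
        show (Filter.map id (dqF φ x0 (c : ℝ))).IsBounded _
        rw [Filter.map_id]; exact hb.1
      have hb2 : (dqF φ x0 (c : ℝ)).IsBoundedUnder (· ≥ ·) id := by
        show (Filter.map id (dqF φ x0 (c : ℝ))).IsBounded _
        rw [Filter.map_id]; exact hb.2
      exact ⟨Filter.liminf_le_of_frequently_le hfreq.2 hb2,
        Filter.le_limsup_of_frequently_le hfreq.1 hb1⟩
    · obtain ⟨x0, hx0⟩ := not_forall.mp hball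
      rw [Classical.not_imp] at hx0
      obtain ⟨hmem, hnb⟩ := hx0
      refine ⟨x0, hmem, ?_⟩
      rw [LIntv, if_neg hnb]
      trivial
  obtain ⟨x0, hx0, hmem⟩ := key
  have h1 := hder x0 c hmem
  have hle : (toDual (Set.Icc (a : ℝ) (b : ℝ)), toDual (Set.Icc (c : ℝ) (d : ℝ))) ≤
      (toDual ({x0} : Set ℝ), toDual ({(c : ℝ)} : Set ℝ)) := by
    constructor
    · exact OrderDual.toDual_le_toDual.mpr (Set.singleton_subset_iff.mpr hx0)
    · exact OrderDual.toDual_le_toDual.mpr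
        (Set.singleton_subset_iff.mpr ⟨le_refl _, hcd⟩)
  have h2 : ofDual (f (toDual ({x0} : Set ℝ), toDual ({(c : ℝ)} : Set ℝ))).2 ⊆
      ofDual (f (toDual (Set.Icc (a : ℝ) (b : ℝ)), toDual (Set.Icc (c : ℝ) (d : ℝ)))).2 :=
    (hscott.monotone hle).2
  exact ⟨m * c, h2 h1, c, ⟨le_refl _, hcd⟩, rfl⟩
end
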